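/- arXiv:1203.2823 — 7 statements merged into one kernel-verified Lean document; each statement's English description precedes it below -/
import Mathlib

section
/- Let m be an integer and p an odd prime dividing m−4. Then for every positive integer n, p^{ν_p(n)} divides ∑_{k=0}^{n-1} C(2k,k)/m^k, i.e., the p-adic valuation of ∑_{k=0}^{n-1} C(2k,k)·m^{n-1-k} is at least ν_p(n) (equivalently, ν_p of the rational sum ∑_{k=0}^{n-1} C(2k,k)/m^k is ≥ ν_p(n)). -/
open Finset Nat

private def Sb (n j : ℕ) : ℕ :=
  ∑ k ∈ Finset.range n, (2 * k).choose k * (n - 1 - k).choose j * 4 ^ (n - 1 - k - j)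

private lemma Sb_zero (j : ℕ) : Sb 0 j = 0 := by simp [Sb]

private lemma Sb_succ_zero (n : ℕ) : Sb (n + 1) 0 = 4 * Sb n 0 + (2 * n).choose n := by
  unfold Sb
  rw [Finset.sum_range_succ, Finset.mul_sum]
  congr 1
  · refine Finset.sum_congr rfl fun k hk => ?_
    have hk' : k < n := Finset.mem_range.mp hk
    simp only [Nat.choose_zero_right, Nat.sub_zero]
    have h1 : n + 1 - 1 - k = (n - 1 - k) + 1 := by omega
    rw [h1, pow_succ]
    ring
  · have : n + 1 - 1 - n - 0 = 0 := by omega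
    simp [this]

private lemma Sb_succ_succ (n j : ℕ) : Sb (n + 1) (j + 1) = Sb n j + 4 * Sb n (j + 1) := by
  unfold Sb
  rw [Finset.sum_range_succ, Finset.mul_sum, ← Finset.sum_add_distrib]
  have hlast : (n + 1 - 1 - n).choose (j + 1) = 0 := by
    have : n + 1 - 1 - n = 0 := by omega
    simp [this]
  rw [hlast]
  simp only [mul_zero, zero_mul, add_zero]
  refine Finset.sum_congr rfl fun k hk => ?_
  have hk' : k < n := Finset.mem_range.mp hk
  have h1 : n + 1 - 1 - k = (n - 1 - k) + 1 := by omega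
  rw [h1, Nat.choose_succ_succ]
  have h2 : n - 1 - k + 1 - (j + 1) = n - 1 - k - j := by omega
  rw [h2]
  rcases le_or_gt (j + 1) (n - 1 - k) with h | h
  · have h3 : n - 1 - k - j = (n - 1 - k - (j + 1)) + 1 := by omega
    rw [h3, pow_succ]
    ring
  · have h4 : (n - 1 - k).choose (j + 1) = 0 := Nat.choose_eq_zero_of_lt h
    have h5 : n - 1 - k - j = 0 := by omega
    simp [h4, h5]

-- helper binomial identities (ℕ)
private lemma cb (n : ℕ) : 2 * (n * (2 * n - 1).choose (n - 1)) = n * (2 * n).choose n := by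
  cases n with
  | zero => simp
  | succ n =>
    have h1 : 2 * (n + 1) - 1 = 2 * n + 1 := by omega
    have h2 : n + 1 - 1 = n := by omega
    rw [h1, h2]
    have h3 : (2 * n + 2).choose (n + 1) = (2 * n + 1).choose n + (2 * n + 1).choose (n + 1) :=
      Nat.choose_succ_succ _ _
    have h4 : (2 * n + 1).choose (n + 1) = (2 * n + 1).choose n := by
      have := Nat.choose_symm (n := 2 * n + 1) (k := n + 1) (by omega)
      have h5 : 2 * n + 1 - (n + 1) = n := by omega
      rw [h5] at this
      exact this.symm
    have h6 : 2 * (n + 1) = 2 * n + 2 := by omega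
    rw [h6, h3, h4]
    ring

private lemma absorb (n k : ℕ) : n * (n - 1).choose k = (k + 1) * n.choose (k + 1) := by
  cases n with
  | zero => simp
  | succ n =>
    simp only [Nat.succ_sub_one]
    have := Nat.add_one_mul_choose_eq n k
    rw [this, mul_comm]

private lemma h1N (n : ℕ) : (2 * n + 1) * (2 * n).choose n = (n + 1) * (2 * n + 1).choose n := by
  have := Nat.add_one_mul_choose_eq (2 * n) n
  have h4 : (2 * n + 1).choose (n + 1) = (2 * n + 1).choose n := by
    have h := Nat.choose_symm (n := 2 * n + 1) (k := n + 1) (by omega)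
    have h5 : 2 * n + 1 - (n + 1) = n := by omega
    rw [h5] at h
    exact h.symm
  rw [h4] at this
  rw [this, mul_comm]

private lemma h5N (n j : ℕ) :
    ((j : ℤ) + 2) * n.choose (j + 2) = ((n : ℤ) - j - 1) * n.choose (j + 1) := by
  rcases le_or_gt (j + 1) n with h | h
  · have := Nat.choose_succ_right_eq n (j + 1)
    have hc : (n.choose (j + 2) * (j + 2) : ℤ) = n.choose (j + 1) * (n - (j + 1) : ℕ) := by
      exact_mod_cast this
    rw [Nat.cast_sub h] at hc
    push_cast at hc ⊢
    linarith [hc]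
  · have hA : n.choose (j + 1) = 0 := Nat.choose_eq_zero_of_lt h
    have hB : n.choose (j + 2) = 0 := Nat.choose_eq_zero_of_lt (by omega)
    rw [hA, hB]
    simp

private lemma key (n j : ℕ) :
    ((2 * j + 1)! : ℤ) * Sb n j =
      (n : ℤ) * ((2 * n - 1).choose (n - 1) : ℤ) * ((n - 1).choose j : ℤ) * ((j ! : ℤ)) ^ 2 := by
  induction n generalizing j with
  | zero => simp [Sb_zero]
  | succ n ih =>
    have hn1 : 2 * (n + 1) - 1 = 2 * n + 1 := by omega
    have hn2 : n + 1 - 1 = n := by omega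
    rw [hn1, hn2]
    cases j with
    | zero =>
      have hrec : (Sb (n + 1) 0 : ℤ) = 4 * Sb n 0 + (2 * n).choose n := by
        exact_mod_cast Sb_succ_zero n
      have hE1 := ih 0
      have hh1 : ((2 * n + 1 : ℕ) : ℤ) * (2 * n).choose n
          = ((n + 1 : ℕ) : ℤ) * (2 * n + 1).choose n := by exact_mod_cast h1N n
      have hh2 : (2 : ℤ) * ((n : ℤ) * (2 * n - 1).choose (n - 1)) = (n : ℤ) * (2 * n).choose n := by
        exact_mod_cast cb n
      push_cast at hh1 hh2 hE1 ⊢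
      simp only [Nat.choose_zero_right, Nat.factorial] at hE1 ⊢
      push_cast at hE1 ⊢
      linear_combination hrec + 4 * hE1 + hh1 + 2 * hh2
    | succ j =>
      have hrec : (Sb (n + 1) (j + 1) : ℤ) = Sb n j + 4 * Sb n (j + 1) := by
        exact_mod_cast Sb_succ_succ n j
      have hE1 := ih j
      have hE2 := ih (j + 1)
      have hFfact : ((2 * (j + 1) + 1)! : ℤ) = (2 * j + 3) * (2 * j + 2) * (2 * j + 1)! := by
        have : 2 * (j + 1) + 1 = (2 * j + 2) + 1 := by omega
        rw [this, Nat.factorial_succ, Nat.factorial_succ]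
        push_cast
        ring
      have hGfact : (((j + 1)! : ℕ) : ℤ) = ((j : ℤ) + 1) * (j ! : ℤ) := by
        rw [Nat.factorial_succ]; push_cast; ring
      have hh1 : ((2 * n + 1 : ℕ) : ℤ) * (2 * n).choose n
          = ((n + 1 : ℕ) : ℤ) * (2 * n + 1).choose n := by exact_mod_cast h1N n
      have hh2 : (2 : ℤ) * ((n : ℤ) * (2 * n - 1).choose (n - 1)) = (n : ℤ) * (2 * n).choose n := by
        exact_mod_cast cb n
      have hh3 : (n : ℤ) * (n - 1).choose j = ((j : ℤ) + 1) * n.choose (j + 1) := by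
        exact_mod_cast absorb n j
      have hh4 : (n : ℤ) * (n - 1).choose (j + 1) = ((j : ℤ) + 2) * n.choose (j + 2) := by
        have := absorb n (j + 1)
        exact_mod_cast this
      have hh5 := h5N n j
      push_cast at hh1 hh2 ⊢
      linear_combination ((2 * (j + 1) + 1)! : ℤ) * hrec
        + (Sb n j : ℤ) * hFfact
        + (2 * (j : ℤ) + 3) * (2 * (j : ℤ) + 2) * hE1 + 4 * hE2
        + ((2 * (j : ℤ) + 3) * ((j : ℤ) + 1) * ((n - 1).choose j : ℤ) * (j ! : ℤ) ^ 2
            + 2 * ((n - 1).choose (j + 1) : ℤ) * ((j + 1)! : ℤ) ^ 2) * hh2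
        + ((2 * (j : ℤ) + 3) * ((j : ℤ) + 1) * ((2 * n).choose n : ℤ) * (j ! : ℤ) ^ 2) * hh3
        + (2 * ((2 * n).choose n : ℤ) * ((j + 1)! : ℤ) ^ 2) * hh4
        + (2 * ((2 * n).choose n : ℤ) * ((j + 1)! : ℤ) ^ 2) * hh5
        - ((2 * (j : ℤ) + 3) * ((2 * n).choose n : ℤ) * (n.choose (j + 1) : ℤ)
            * (((j + 1)! : ℤ) + ((j : ℤ) + 1) * (j ! : ℤ))) * hGfact
        + ((n.choose (j + 1) : ℤ) * ((j + 1)! : ℤ) ^ 2) * hh1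

private lemma expand (m : ℤ) (n : ℕ) :
    ∑ k ∈ Finset.range n, (((2 * k).choose k : ℕ) : ℤ) * m ^ (n - 1 - k)
      = ∑ j ∈ Finset.range n, (m - 4) ^ j * (Sb n j : ℤ) := by
  have step1 : ∀ k ∈ Finset.range n, (((2 * k).choose k : ℕ) : ℤ) * m ^ (n - 1 - k)
      = ∑ j ∈ Finset.range n,
          (((2 * k).choose k : ℕ) : ℤ) * (((n - 1 - k).choose j : ℤ)
            * ((m - 4) ^ j * (4 : ℤ) ^ (n - 1 - k - j))) := by
    intro k hk
    have hk' : k < n := Finset.mem_range.mp hk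
    have hm : m = (m - 4) + 4 := by ring
    have hpow : m ^ (n - 1 - k) = ∑ j ∈ Finset.range (n - 1 - k + 1),
        (m - 4) ^ j * (4 : ℤ) ^ (n - 1 - k - j) * ((n - 1 - k).choose j : ℤ) := by
      conv_lhs => rw [hm]
      exact add_pow (m - 4) 4 (n - 1 - k)
    have hsub : Finset.range (n - 1 - k + 1) ⊆ Finset.range n := by
      apply Finset.range_subset_range.mpr; omega
    have hext : ∑ j ∈ Finset.range (n - 1 - k + 1),
        (m - 4) ^ j * (4 : ℤ) ^ (n - 1 - k - j) * ((n - 1 - k).choose j : ℤ)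
        = ∑ j ∈ Finset.range n,
        (m - 4) ^ j * (4 : ℤ) ^ (n - 1 - k - j) * ((n - 1 - k).choose j : ℤ) := by
      apply Finset.sum_subset hsub
      intro j _ hj
      have : n - 1 - k < j := by
        simp only [Finset.mem_range] at hj; omega
      rw [Nat.choose_eq_zero_of_lt this]
      simp
    rw [hpow, hext, Finset.mul_sum]
    refine Finset.sum_congr rfl fun j _ => by ring
  rw [Finset.sum_congr rfl step1, Finset.sum_comm]
  refine Finset.sum_congr rfl fun j _ => ?_
  have : (Sb n j : ℤ) = ∑ k ∈ Finset.range n,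
      (((2 * k).choose k : ℕ) : ℤ) * ((n - 1 - k).choose j : ℤ) * (4 : ℤ) ^ (n - 1 - k - j) := by
    unfold Sb
    push_cast
    rfl
  rw [this, Finset.mul_sum]
  refine Finset.sum_congr rfl fun k _ => by ring

theorem stmt_1 (p : ℕ) (hp : p.Prime) (hodd : Odd p) (m : ℤ) (hpm : (p : ℤ) ∣ m - 4)
    (n : ℕ) (hn : 0 < n) :
    (p : ℤ) ^ (padicValNat p n) ∣
      ∑ k ∈ Finset.range n, (Nat.choose (2 * k) k : ℤ) * m ^ (n - 1 - k) := by
  haveI : Fact p.Prime := ⟨hp⟩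
  have hp3 : 3 ≤ p := by
    have h2 := hp.two_le
    rcases Nat.odd_iff.mp hodd with h
    omega
  set v := padicValNat p n with hv
  rw [expand m n]
  apply Finset.dvd_sum
  intro j hj
  rcases le_or_gt v j with hle | hlt
  · -- p^v ∣ (m-4)^j
    have h1 : (p : ℤ) ^ v ∣ (m - 4) ^ j := by
      calc (p : ℤ) ^ v ∣ (p : ℤ) ^ j := pow_dvd_pow _ hle
        _ ∣ (m - 4) ^ j := pow_dvd_pow_of_dvd hpm j
    exact Dvd.dvd.mul_right h1 _
  · -- j < v : need p^(v-j) ∣ Sb n j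
    have keyN : (2 * j + 1)! * Sb n j
        = n * (2 * n - 1).choose (n - 1) * (n - 1).choose j * (j !) ^ 2 := by
      exact_mod_cast key n j
    set a := padicValNat p ((2 * j + 1)!) with ha
    have haj : a ≤ j := by
      have hleg := sub_one_mul_padicValNat_factorial (p := p) (2 * j + 1)
      have h2 : 2 ≤ p - 1 := by omega
      have h3 : 2 * a ≤ (p - 1) * a := Nat.mul_le_mul_right a h2
      have h4 : (p - 1) * a ≤ 2 * j + 1 := by
        rw [← ha] at hleg
        omega
      omega
    have hpv : p ^ v ∣ n := pow_padicValNat_dvd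
    have hdvd1 : p ^ v ∣ (2 * j + 1)! * Sb n j := by
      rw [keyN]
      exact Dvd.dvd.mul_right (Dvd.dvd.mul_right (Dvd.dvd.mul_right hpv _) _) _
    set u := (2 * j + 1)! / p ^ a with hu
    have hfac : p ^ a * u = (2 * j + 1)! := by
      rw [hu, ha]
      have := Nat.ordProj_mul_ordCompl_eq_self ((2 * j + 1)!) p
      rwa [Nat.factorization_def _ hp] at this
    have hnd : ¬ p ∣ u := by
      rw [hu, ha, ← Nat.factorization_def _ hp]
      exact Nat.not_dvd_ordCompl hp (Nat.factorial_ne_zero _)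
    have hdvd2 : p ^ (v - a) ∣ u * Sb n j := by
      have h5 : p ^ a * (p ^ (v - a) ) = p ^ v := by
        rw [← pow_add]
        congr 1
        omega
      have h6 : p ^ a * (p ^ (v - a)) ∣ p ^ a * (u * Sb n j) := by
        rw [h5, ← mul_assoc, hfac]
        exact hdvd1
      exact (mul_dvd_mul_iff_left (pow_ne_zero a hp.pos.ne')).mp h6
    have hcop : Nat.Coprime (p ^ (v - a)) u :=
      Nat.Coprime.pow_left _ (hp.coprime_iff_not_dvd.mpr hnd)
    have hdvd3 : p ^ (v - a) ∣ Sb n j := hcop.dvd_of_dvd_mul_left hdvd2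
    have hdvd4 : p ^ (v - j) ∣ Sb n j :=
      dvd_trans (pow_dvd_pow _ (by omega)) hdvd3
    have hZ : (p : ℤ) ^ (v - j) ∣ (Sb n j : ℤ) := by
      exact_mod_cast Int.natCast_dvd_natCast.mpr hdvd4
    have hj1 : (p : ℤ) ^ j ∣ (m - 4) ^ j := pow_dvd_pow_of_dvd hpm j
    have : (p : ℤ) ^ j * (p : ℤ) ^ (v - j) ∣ (m - 4) ^ j * (Sb n j : ℤ) :=
      mul_dvd_mul hj1 hZ
    rwa [← pow_add, (by omega : j + (v - j) = v)] at this
end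

section
/- Let m be an integer and p an odd prime dividing m−4. Then for every positive integer n, the p-adic valuation of ∑_{k=0}^{n-1} (−1)^k·C(2k,k)·C(n−1,k)/m^k is at least ν_p(n). -/
open Finset

lemma natid (N k : ℕ) : (N+1) * Nat.choose (N+1) k = (N+k+1) * Nat.choose N k + k * Nat.choose N (k-1) := by
  cases k with
  | zero => simp
  | succ j =>
    rw [Nat.choose_succ_succ]
    rcases le_or_gt j N with hj | hj
    · have h := Nat.choose_succ_right_eq N j
      simp only [Nat.add_sub_cancel]
      zify [hj] at h ⊢
      linear_combination -h
    · simp [Nat.choose_eq_zero_of_lt hj, Nat.choose_eq_zero_of_lt (show N < j+1 by omega)]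

lemma cbsucc (k : ℕ) : ((k:ℤ)+1) * (Nat.choose (2*(k+1)) (k+1) : ℤ)
    = 2*(2*(k:ℤ)+1) * (Nat.choose (2*k) k : ℤ) := by
  have h2 : (k + 1) * Nat.centralBinom (k + 1) = 2 * (2 * k + 1) * Nat.centralBinom k :=
    Nat.succ_mul_centralBinom_succ k
  rw [Nat.centralBinom_eq_two_mul_choose, Nat.centralBinom_eq_two_mul_choose] at h2
  exact_mod_cast h2

lemma keyB (N : ℕ) : ∑ k ∈ Finset.range (N+1),
    (-1:ℤ)^k * (Nat.choose (2*k) k : ℤ) * (Nat.choose N k : ℤ) * 4^(N-k)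
    = (Nat.choose (2*N) N : ℤ) := by
  induction N with
  | zero => simp
  | succ N ih =>
    set G : ℕ → ℤ := fun j => (-1)^(j+1) * j * (Nat.choose (2*j) j : ℤ) * (Nat.choose N (j-1) : ℤ) * 4^(N+1-j) with hG
    have perk : ∀ k ≤ N,
        ((N:ℤ)+1) * ((-1:ℤ)^k * (Nat.choose (2*k) k : ℤ) * (Nat.choose (N+1) k : ℤ) * 4^(N+1-k))
        - (4*(N:ℤ)+2) * ((-1:ℤ)^k * (Nat.choose (2*k) k : ℤ) * (Nat.choose N k : ℤ) * 4^(N-k))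
        = G (k+1) - G k := by
      intro k hk
      have c1 := cbsucc k
      have c2 : ((N:ℤ)+1) * (Nat.choose (N+1) k : ℤ)
          = ((N:ℤ)+(k:ℤ)+1) * (Nat.choose N k : ℤ) + (k:ℤ) * (Nat.choose N (k-1) : ℤ) := by
        exact_mod_cast natid N k
      have e1 : N + 1 - k = (N - k) + 1 := by omega
      have e2 : N + 1 - (k+1) = N - k := by omega
      simp only [hG, e1, e2, Nat.add_sub_cancel]
      rw [pow_succ]
      push_cast
      have hsign : (-1:ℤ)^(k+1+1) = (-1:ℤ)^k := by ring
      have hsign2 : (-1:ℤ)^(k+1) = -(-1:ℤ)^k := by ring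
      rw [hsign, hsign2]
      linear_combination ((-1:ℤ)^k * 4^(N-k) * 4 * (Nat.choose (2*k) k : ℤ)) * c2
        - ((-1:ℤ)^k * 4^(N-k) * (Nat.choose N k : ℤ)) * c1
    have h1 : ∑ k ∈ Finset.range (N+1),
        (((N:ℤ)+1) * ((-1:ℤ)^k * (Nat.choose (2*k) k : ℤ) * (Nat.choose (N+1) k : ℤ) * 4^(N+1-k))
        - (4*(N:ℤ)+2) * ((-1:ℤ)^k * (Nat.choose (2*k) k : ℤ) * (Nat.choose N k : ℤ) * 4^(N-k)))
        = G (N+1) - G 0 := by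
      rw [← Finset.sum_range_sub G (N+1)]
      exact Finset.sum_congr rfl fun k hk => perk k (Nat.lt_succ_iff.mp (Finset.mem_range.mp hk))
    have hG0 : G 0 = 0 := by simp [hG]
    rw [Finset.sum_sub_distrib, ← Finset.mul_sum, ← Finset.mul_sum, ih, hG0, sub_zero] at h1
    have hGN : G (N+1) = (-1:ℤ)^N * ((N:ℤ)+1) * (Nat.choose (2*(N+1)) (N+1) : ℤ) := by
      have hs : (-1:ℤ)^(N+1+1) = (-1:ℤ)^N := by ring
      simp only [hG, Nat.add_sub_cancel, Nat.choose_self, Nat.sub_self, pow_zero, Nat.cast_one, hs]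
      push_cast
      ring
    have hcb := cbsucc N
    apply mul_left_cancel₀ (a := (N:ℤ)+1) (by positivity)
    rw [hGN] at h1
    rw [Finset.sum_range_succ, mul_add]
    have hs2 : (-1:ℤ)^(N+1) = -(-1:ℤ)^N := by ring
    simp only [Nat.choose_self, Nat.sub_self, pow_zero, Nat.cast_one, mul_one, hs2]
    linear_combination h1 - hcb


lemma trinom (N k j : ℕ) :
    Nat.choose N k * Nat.choose (N-k) j = Nat.choose N j * Nat.choose (N-j) k := by
  rcases le_or_gt (k+j) N with h | h
  · have h1 := Nat.choose_mul (n := N) (k := k+j) (s := k) (by omega)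
    have h2 := Nat.choose_mul (n := N) (k := k+j) (s := j) (by omega)
    have hsym : (k+j).choose k = (k+j).choose j := by
      rw [← Nat.choose_symm (show k ≤ k+j by omega), Nat.add_sub_cancel_left]
    rw [show k+j-k = j by omega] at h1
    rw [show k+j-j = k by omega] at h2
    rw [← h1, hsym, h2]
  · rcases le_or_gt k N with hk | hk
    · rw [Nat.choose_eq_zero_of_lt (show N-k < j by omega)]
      rcases le_or_gt j N with hj | hj
      · rw [Nat.choose_eq_zero_of_lt (show N-j < k by omega)]; ring
      · rw [Nat.choose_eq_zero_of_lt hj]; ring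
    · rw [Nat.choose_eq_zero_of_lt hk]
      rcases le_or_gt j N with hj | hj
      · rw [Nat.choose_eq_zero_of_lt (show N-j < k by omega)]; ring
      · rw [Nat.choose_eq_zero_of_lt hj]; ring


lemma idI (N : ℕ) (m : ℤ) :
    ∑ k ∈ Finset.range (N+1), (-1:ℤ)^k * (Nat.choose (2*k) k : ℤ) * (Nat.choose N k : ℤ) * m^(N-k)
    = ∑ j ∈ Finset.range (N+1),
        (Nat.choose N j : ℤ) * (Nat.choose (2*(N-j)) (N-j) : ℤ) * (m-4)^j := by
  have step1 : ∀ k ∈ Finset.range (N+1),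
      (-1:ℤ)^k * (Nat.choose (2*k) k : ℤ) * (Nat.choose N k : ℤ) * m^(N-k)
      = ∑ j ∈ Finset.range (N+1),
          (-1:ℤ)^k * (Nat.choose (2*k) k : ℤ) * (Nat.choose N k : ℤ) *
            ((m-4)^j * 4^(N-k-j) * (Nat.choose (N-k) j : ℤ)) := by
    intro k hk
    rw [← Finset.mul_sum]
    congr 1
    have hm : m = (m-4) + 4 := by ring
    rw [hm, add_pow]
    rw [Finset.sum_subset (Finset.range_subset_range.mpr (show N-k+1 ≤ N+1 by omega))]
    · exact Finset.sum_congr rfl fun j hj => by ring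
    · intro j hj hj2
      simp only [Finset.mem_range] at hj hj2
      rw [Nat.choose_eq_zero_of_lt (show N-k < j by omega)]
      simp
  rw [Finset.sum_congr rfl step1, Finset.sum_comm]
  apply Finset.sum_congr rfl
  intro j hj
  have hjN : j ≤ N := by simpa using Nat.lt_succ_iff.mp (Finset.mem_range.mp hj)
  have step2 : ∀ k ∈ Finset.range (N+1),
      (-1:ℤ)^k * (Nat.choose (2*k) k : ℤ) * (Nat.choose N k : ℤ) *
        ((m-4)^j * 4^(N-k-j) * (Nat.choose (N-k) j : ℤ))
      = (Nat.choose N j : ℤ) * (m-4)^j *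
        ((-1:ℤ)^k * (Nat.choose (2*k) k : ℤ) * (Nat.choose (N-j) k : ℤ) * 4^(N-j-k)) := by
    intro k hk
    have htr : (Nat.choose N k : ℤ) * (Nat.choose (N-k) j : ℤ)
        = (Nat.choose N j : ℤ) * (Nat.choose (N-j) k : ℤ) := by exact_mod_cast trinom N k j
    rw [show N-k-j = N-j-k by omega]
    linear_combination ((-1:ℤ)^k * (Nat.choose (2*k) k : ℤ) * (m-4)^j * 4^(N-j-k)) * htr
  rw [Finset.sum_congr rfl step2, ← Finset.mul_sum]
  have shrink : ∑ k ∈ Finset.range (N+1),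
      (-1:ℤ)^k * (Nat.choose (2*k) k : ℤ) * (Nat.choose (N-j) k : ℤ) * 4^(N-j-k)
      = ∑ k ∈ Finset.range (N-j+1),
      (-1:ℤ)^k * (Nat.choose (2*k) k : ℤ) * (Nat.choose (N-j) k : ℤ) * 4^(N-j-k) := by
    rw [Finset.sum_subset (Finset.range_subset_range.mpr (show N-j+1 ≤ N+1 by omega))]
    intro k hk hk2
    simp only [Finset.mem_range] at hk hk2
    rw [Nat.choose_eq_zero_of_lt (show N-j < k by omega)]
    simp
  rw [shrink, keyB (N-j)]
  ring


lemma divC (p : ℕ) (hp : p.Prime) (hodd : Odd p) (n v : ℕ) (hv : p^v ∣ n) (hn : 0 < n)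
    (j : ℕ) (hj : j < n) (m : ℤ) (hpm : (p:ℤ) ∣ m - 4) :
    (p:ℤ)^v ∣ (Nat.choose (n-1) j : ℤ) * (Nat.choose (2*(n-1-j)) (n-1-j) : ℤ) * (m-4)^j := by
  have hp3 : 3 ≤ p := by
    have h1 := hp.two_le
    have h2 := Nat.odd_iff.mp hodd
    omega
  rcases le_or_gt v j with h | h
  · -- p^v ∣ (m-4)^j
    have h1 : (p:ℤ)^v ∣ (m-4)^v := pow_dvd_pow_of_dvd hpm v
    have h2 : (m-4:ℤ)^v ∣ (m-4)^j := pow_dvd_pow _ h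
    exact (h1.trans h2).trans (Dvd.dvd.mul_left dvd_rfl _)
  · -- j < v
    set ℓ : ℕ := if j = 0 then 0 else Nat.log p j + 1 with hℓ
    have hℓ1 : j < p^ℓ := by
      rcases Nat.eq_zero_or_pos j with hj0 | hj0
      · simp [hℓ, hj0]
      · simp only [hℓ, if_neg hj0.ne']
        exact Nat.lt_pow_succ_log_self hp.one_lt j
    have hℓ2 : ℓ ≤ j := by
      rcases Nat.eq_zero_or_pos j with hj0 | hj0
      · simp [hℓ, hj0]
      · simp only [hℓ, if_neg hj0.ne']
        have := Nat.log_lt_self p hj0.ne'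
        omega
    have hℓv : ℓ < v := by omega
    set M : ℕ := n - 1 - j with hM
    -- n ≥ 1 + j and p^v ∣ n, p^v > j+1
    have hpvj : 1 + j < p^v := by
      calc 1 + j ≤ p^ℓ := by omega
      _ < p^v := Nat.pow_lt_pow_right hp.one_lt hℓv
    have hnge : 1 + j ≤ n := by omega
    -- key: p^(v-ℓ) ∣ centralBinom M
    have hkum : p^(v-ℓ) ∣ Nat.choose (2*M) M := by
      set b : ℕ := max (Nat.log p (2*M) + 1) (v+1) with hb
      have hnb : Nat.log p (2*M) < b := by omega
      have hmul := Nat.Prime.emultiplicity_choose hp (show M ≤ 2*M by omega) hnb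
      apply pow_dvd_of_le_emultiplicity
      rw [hmul]
      have hsub : Finset.Ico (ℓ+1) (v+1) ⊆
          {i ∈ Finset.Ico 1 b | p ^ i ≤ M % p ^ i + (2*M - M) % p ^ i} := by
        intro i hi
        simp only [Finset.mem_Ico] at hi
        simp only [Finset.mem_filter, Finset.mem_Ico]
        refine ⟨⟨by omega, by omega⟩, ?_⟩
        rw [show 2*M - M = M by omega]
        -- compute M % p^i
        have hpi : p^i ∣ n := (pow_dvd_pow p (show i ≤ v by omega)).trans hv
        obtain ⟨t, ht⟩ := hpi
        rcases t with _ | t'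
        · omega
        have hple : p^ℓ ≤ p^(i-1) := Nat.pow_le_pow_right hp.pos (by omega)
        have hpp : p^(i-1) * 3 ≤ p^i := by
          have : p^i = p^(i-1) * p := by
            rw [← pow_succ]
            congr 1
            omega
          calc p^(i-1)*3 ≤ p^(i-1)*p := Nat.mul_le_mul_left _ hp3
          _ = p^i := this.symm
        have hji : 1 + j ≤ p^(i-1) := by omega
        rw [Nat.mul_succ] at ht
        have hMeq : M = p^i * t' + (p^i - (1+j)) := by omega
        rw [hMeq, Nat.mul_add_mod, Nat.mod_eq_of_lt (by omega)]
        omega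
      calc ((v - ℓ : ℕ) : ℕ∞) = ((Finset.Ico (ℓ+1) (v+1)).card : ℕ∞) := by
            rw [Nat.card_Ico, show v+1-(ℓ+1) = v-ℓ by omega]
      _ ≤ _ := by exact_mod_cast Nat.cast_le.mpr (Finset.card_le_card hsub)
    -- combine
    have hA : (p:ℤ)^ℓ ∣ (m-4)^j :=
      (pow_dvd_pow_of_dvd hpm ℓ).trans (pow_dvd_pow _ hℓ2)
    have hB : (p:ℤ)^(v-ℓ) ∣ (Nat.choose (2*M) M : ℤ) := by exact_mod_cast Int.natCast_dvd_natCast.mpr hkum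
    have hsplit : (p:ℤ)^v = (p:ℤ)^(v-ℓ) * (p:ℤ)^ℓ := by
      rw [← pow_add]
      congr 1
      omega
    rw [hsplit, mul_assoc]
    exact Dvd.dvd.mul_left (mul_dvd_mul hB hA) _


theorem stmt_2 (p : ℕ) (hp : p.Prime) (hodd : Odd p) (m : ℤ) (hpm : (p : ℤ) ∣ m - 4)
    (n : ℕ) (hn : 0 < n) :
    (p : ℤ) ^ (padicValNat p n) ∣
      ∑ k ∈ Finset.range n,
        (-1) ^ k * (Nat.choose (2 * k) k : ℤ) * (Nat.choose (n - 1) k : ℤ) * m ^ (n - 1 - k) := by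
  have hv : p ^ (padicValNat p n) ∣ n := pow_padicValNat_dvd
  obtain ⟨N, rfl⟩ : ∃ N, n = N + 1 := ⟨n-1, by omega⟩
  simp only [Nat.add_sub_cancel]
  rw [idI N m]
  apply Finset.dvd_sum
  intro j hj
  have h := divC p hp hodd (N+1) (padicValNat p (N+1)) hv (by omega) j
    (Finset.mem_range.mp hj) m hpm
  simpa only [Nat.add_sub_cancel] using h
end

section
/- Let m ≡ 1 (mod 3) be an integer. Then for every positive integer n, the 3-adic valuation of u_n(m−2,1)/n − u_n(−1,1)/n is at least ν₃(m−1) − 1, where u_n(A,1) is the Lucas sequence. -/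
/-- The Lucas sequence `u_n(A,1)`: `u_0 = 0`, `u_1 = 1`, `u_{n+1} = A·u_n − u_{n−1}`. -/
def lucasU (A : ℤ) : ℕ → ℤ
  | 0 => 0
  | 1 => 1
  | n + 2 => A * lucasU A (n + 1) - lucasU A n

def lucasV (A : ℤ) : ℕ → ℤ
  | 0 => 2
  | 1 => A
  | n + 2 => A * lucasV A (n + 1) - lucasV A n

lemma lucasU_add (A : ℤ) (w : ℕ → ℤ) (hw : ∀ k, w (k+2) = A * w (k+1) - w k)
    (m : ℕ) : ∀ n : ℕ, w (m + 1 + n) = w (m+1) * lucasU A (n+1) - w m * lucasU A n := by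
  intro n
  induction n using Nat.twoStepInduction with
  | zero => simp [lucasU]
  | one => simp only [lucasU]; rw [show m + 1 + 1 = m + 2 from rfl, hw m]; ring
  | more k ih1 ih2 =>
      simp only [show m + 1 + (k+1) = m + 1 + k + 1 from rfl] at ih2
      rw [show m + 1 + (k + 2) = (m + 1 + k) + 2 from by ring, hw, ih1, ih2,
        show lucasU A (k+2+1) = A * lucasU A (k+2) - lucasU A (k+1) from rfl,
        show lucasU A (k+2) = A * lucasU A (k+1) - lucasU A k from rfl]
      ring

lemma cassini (A : ℤ) : ∀ k : ℕ, lucasU A k * lucasU A (k+2) - lucasU A (k+1)^2 = -1 := by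
  intro k
  induction k with
  | zero => simp [lucasU]
  | succ k ih =>
      rw [show lucasU A (k+1+2) = A * lucasU A (k+2) - lucasU A (k+1) from rfl] at *
      rw [show lucasU A (k+2) = A * lucasU A (k+1) - lucasU A k from rfl] at *
      nlinarith [ih]

lemma lucasV_eq (A : ℤ) : ∀ k : ℕ, lucasV A (k+1) = lucasU A (k+2) - lucasU A k := by
  intro k
  induction k using Nat.twoStepInduction with
  | zero => simp [lucasU, lucasV]
  | one => simp [lucasU, lucasV]; ring
  | more k ih1 ih2 =>
      rw [show lucasV A (k+2+1) = A * lucasV A (k+1+1) - lucasV A (k+1) from rfl, ih1, ih2,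
        show lucasU A (k+2+2) = A * lucasU A (k+2+1) - lucasU A (k+2) from rfl,
        show lucasU A (k+2) = A * lucasU A (k+1) - lucasU A k from rfl]
      ring

lemma lucasU_triple (A : ℤ) (k : ℕ) :
    lucasU A (3*(k+1)) = lucasU A (k+1) * (lucasV A (k+1)^2 - 1) := by
  have h1 : lucasU A (k + 1 + k) = lucasU A (k+1) * lucasU A (k+1) - lucasU A k * lucasU A k :=
    lucasU_add A (lucasU A) (fun _ => rfl) k k
  have h2 : lucasU A (k + 1 + 1 + k) =
      lucasU A (k+2) * lucasU A (k+1) - lucasU A (k+1) * lucasU A k :=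
    lucasU_add A (lucasU A) (fun _ => rfl) (k+1) k
  have h3 : lucasU A (2*k+1 + 1 + (k+1)) =
      lucasU A (2*k+2) * lucasU A (k+2) - lucasU A (2*k+1) * lucasU A (k+1) :=
    lucasU_add A (lucasU A) (fun _ => rfl) (2*k+1) (k+1)
  have e1 : k + 1 + k = 2*k+1 := by ring
  have e2 : k + 1 + 1 + k = 2*k+2 := by ring
  have e3 : 2*k+1 + 1 + (k+1) = 3*(k+1) := by ring
  rw [e1] at h1; rw [e2] at h2; rw [e3] at h3
  rw [h3, h1, h2, lucasV_eq]
  linear_combination lucasU A (k+1) * cassini A k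

lemma dvd_lucas_sub (A B d : ℤ) (h : d ∣ A - B) (w v : ℕ → ℤ)
    (hw : ∀ k, w (k+2) = A * w (k+1) - w k) (hv : ∀ k, v (k+2) = B * v (k+1) - v k)
    (h0 : d ∣ w 0 - v 0) (h1 : d ∣ w 1 - v 1) :
    ∀ n, d ∣ w n - v n := by
  intro n
  induction n using Nat.twoStepInduction with
  | zero => exact h0
  | one => exact h1
  | more k ih1 ih2 =>
      rw [hw, hv]
      have : A * w (k+1) - w k - (B * v (k+1) - v k)
          = (A - B) * w (k+1) + B * (w (k+1) - v (k+1)) - (w k - v k) := by ring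
      rw [this]
      exact dvd_sub (dvd_add (Dvd.dvd.mul_right h _) (Dvd.dvd.mul_left ih2 _)) ih1

lemma dvd_lucasU_sub (A B d : ℤ) (h : d ∣ A - B) (n : ℕ) :
    d ∣ lucasU A n - lucasU B n :=
  dvd_lucas_sub A B d h (lucasU A) (lucasU B) (fun _ => rfl) (fun _ => rfl)
    (by simp [lucasU]) (by simp [lucasU]) n

lemma dvd_lucasV_sub (A B d : ℤ) (h : d ∣ A - B) (n : ℕ) :
    d ∣ lucasV A n - lucasV B n :=
  dvd_lucas_sub A B d h (lucasV A) (lucasV B) (fun _ => rfl) (fun _ => rfl)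
    (by simp [lucasV]) (by simpa [lucasV] using h) n

lemma lucasV_neg_one (n : ℕ) : (3:ℤ) ∣ lucasV (-1) n + 1 := by
  induction n using Nat.twoStepInduction with
  | zero => decide
  | one => decide
  | more k ih1 ih2 =>
      rw [show lucasV (-1) (k+2) = (-1) * lucasV (-1) (k+1) - lucasV (-1) k from rfl]
      have : (-1) * lucasV (-1) (k+1) - lucasV (-1) k + 1
          = 3 - (lucasV (-1) (k+1) + 1) - (lucasV (-1) k + 1) := by ring
      rw [this]
      exact dvd_sub (dvd_sub ⟨1, by ring⟩ ih2) ih1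

lemma lucasU_neg_one_period (n : ℕ) : lucasU (-1) (n + 3) = lucasU (-1) n := by
  rw [show lucasU (-1) (n+3) = (-1) * lucasU (-1) (n+2) - lucasU (-1) (n+1) from rfl,
    show lucasU (-1) (n+2) = (-1) * lucasU (-1) (n+1) - lucasU (-1) n from rfl]
  ring

lemma lucasU_neg_one_of_three_dvd (m : ℕ) : lucasU (-1) (3 * m) = 0 := by
  induction m with
  | zero => rfl
  | succ k ih => rw [show 3 * (k+1) = 3*k + 3 from by ring, lucasU_neg_one_period, ih]

lemma key_s11 (A : ℤ) (e : ℕ) (he1 : 1 ≤ e) (hA : (3:ℤ)^e ∣ A + 1) :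
    ∀ n : ℕ, 0 < n → (3:ℤ)^(e - 1 + padicValNat 3 n) ∣ lucasU A n - lucasU (-1) n := by
  intro n
  induction n using Nat.strong_induction_on with
  | _ n IH =>
  intro hn
  have hA3 : (3:ℤ) ∣ A + 1 := dvd_trans (dvd_pow_self 3 (by omega : e ≠ 0)) hA
  by_cases h3 : 3 ∣ n
  · -- n = 3 * m
    obtain ⟨m, rfl⟩ := h3
    have hm : 0 < m := by omega
    obtain ⟨k, rfl⟩ : ∃ k, m = k + 1 := ⟨m - 1, by omega⟩
    have hv : padicValNat 3 (3 * (k+1)) = padicValNat 3 (k+1) + 1 := by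
      rw [padicValNat.mul (by norm_num) (by omega)]
      simp [padicValNat.self]
      omega
    rw [hv, lucasU_triple A k, lucasU_triple (-1) k]
    have ihm := IH (k+1) (by omega) (by omega)
    set a := lucasU A (k+1)
    set b := lucasU (-1) (k+1)
    set x := lucasV A (k+1)
    set y := lucasV (-1) (k+1)
    have hdecomp : a * (x^2 - 1) - b * (y^2 - 1)
        = (a - b) * (x^2 - 1) + b * ((x - y) * (x + y)) := by ring
    rw [hdecomp]
    have hxy : (3:ℤ)^e ∣ x - y := dvd_lucasV_sub A (-1) _ (by simpa using hA) (k+1)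
    have hx1 : (3:ℤ) ∣ x^2 - 1 := by
      have h1 : (3:ℤ) ∣ x + 1 := by
        have hd := dvd_lucasV_sub A (-1) 3 (by simpa using hA3) (k+1)
        have h2 := lucasV_neg_one (k+1)
        have h4 : (3:ℤ) ∣ (x - y) + (y + 1) := dvd_add hd h2
        have h5 : x - y + (y + 1) = x + 1 := by ring
        rwa [h5] at h4
      have hxx : x^2 - 1 = (x+1) * (x-1) := by ring
      rw [hxx]
      exact h1.mul_right _
    apply dvd_add
    · rw [← add_assoc, pow_succ (3:ℤ)]
      exact mul_dvd_mul ihm hx1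
    · by_cases h3k : 3 ∣ (k+1)
      · obtain ⟨j, hj⟩ := h3k
        have hb : b = 0 := by rw [show b = lucasU (-1) (k+1) from rfl, hj,
          lucasU_neg_one_of_three_dvd]
        simp [hb]
      · have hv0 : padicValNat 3 (k+1) = 0 := padicValNat.eq_zero_of_not_dvd h3k
        rw [hv0]
        have : e - 1 + 0 + 1 = e := by omega
        rw [this]
        exact Dvd.dvd.mul_left (hxy.mul_right _) b
  · have hv0 : padicValNat 3 n = 0 := padicValNat.eq_zero_of_not_dvd h3
    rw [hv0]
    have hd : (3:ℤ)^e ∣ lucasU A n - lucasU (-1) n :=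
      dvd_lucasU_sub A (-1) _ (by simpa using hA) n
    exact dvd_trans (pow_dvd_pow 3 (by omega)) hd

/-- For `m ≡ 1 (mod 3)` and `n ≥ 1`,
`ν₃(u_n(m−2,1)/n − u_n(−1,1)/n) ≥ ν₃(m−1) − 1` (with `ν₃(0) = ∞` for `m = 1`). -/
theorem stmt_11 (m : ℤ) (hm : m ≡ 1 [ZMOD 3]) (n : ℕ) (hn : 0 < n) (e : ℕ)
    (he : (e : ℕ∞) ≤ emultiplicity (3 : ℤ) (m - 1)) :
    ‖(lucasU (m - 2) n : ℚ_[3]) / (n : ℚ_[3]) -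
        (lucasU (-1) n : ℚ_[3]) / (n : ℚ_[3])‖ ≤ (3 : ℝ) ^ (1 - (e : ℤ)) := by
  have h3m : (3:ℤ) ∣ m - 1 := by
    have := Int.ModEq.dvd hm
    omega
  set E := max e 1 with hE
  have hE1 : 1 ≤ E := le_max_right e 1
  have h3E : (3:ℤ)^E ∣ m - 1 := by
    rcases Nat.eq_zero_or_pos e with h0 | h1
    · rw [hE, h0]; simpa using h3m
    · rw [hE, max_eq_left h1]
      exact pow_dvd_of_le_emultiplicity he
  have hkey := key_s11 (m - 2) E hE1 (by rw [show m - 2 + 1 = m - 1 by ring]; exact h3E) n hn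
  set v := padicValNat 3 n with hv
  set D : ℤ := lucasU (m-2) n - lucasU (-1) n with hD
  have hnorm : ‖(D : ℚ_[3])‖ ≤ (3:ℝ) ^ (-(E - 1 + v : ℕ) : ℤ) :=
    (Padic.norm_int_le_pow_iff_dvd D (E - 1 + v)).mpr hkey
  have hnne : ((n : ℚ_[3])) ≠ 0 := Nat.cast_ne_zero.mpr hn.ne'
  have hnn : ‖(n : ℚ_[3])‖ = (3:ℝ) ^ (-(v:ℤ)) := by
    rw [Padic.norm_eq_zpow_neg_valuation hnne, Padic.valuation_natCast]
    norm_num [hv]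
  have hrw : (lucasU (m - 2) n : ℚ_[3]) / (n : ℚ_[3]) - (lucasU (-1) n : ℚ_[3]) / (n : ℚ_[3])
      = (D : ℚ_[3]) / (n : ℚ_[3]) := by
    rw [div_sub_div_same, hD]
    push_cast
    ring
  rw [hrw, norm_div, hnn]
  have h3pos : (0:ℝ) < 3 := by norm_num
  rw [div_le_iff₀ (by positivity)]
  calc ‖(D : ℚ_[3])‖ ≤ (3:ℝ) ^ (-(E - 1 + v : ℕ) : ℤ) := hnorm
    _ ≤ (3 : ℝ) ^ (1 - (e : ℤ)) * (3:ℝ) ^ (-(v:ℤ)) := by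
        rw [← zpow_add₀ (by norm_num : (3:ℝ) ≠ 0)]
        apply zpow_le_zpow_right₀ (by norm_num : (1:ℝ) ≤ 3)
        have : (E : ℤ) ≤ 1 ∨ (e:ℤ) ≤ (E:ℤ) := by
          rcases Nat.eq_zero_or_pos e with h0 | h1
          · left; simp [hE, h0]
          · right; rw [hE, max_eq_left h1]
        push_cast
        omega
end

section
/- For every positive integer n and every x (in a commutative ring containing 1/4, e.g. ℚ): ∑_{k=0}^{n} C(2k,k)·C(n,k)·(−x)^k = (1/4^n)·∑_{j=0}^{n} C(2j,j)·C(2(n−j), n−j)·(1−4x)^j. Equivalently, as a polynomial identity over ℤ: 4^n·∑_{k=0}^{n} C(2k,k)·C(n,k)·(−x)^k = ∑_{j=0}^{n} C(2j,j)·C(2(n−j),n−j)·(1−4x)^j. -/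
open Finset

private noncomputable def cb_s14 (j : ℕ) : ℚ := (Nat.choose (2 * j) j : ℚ)

private lemma cb_succ (m : ℕ) : (m + 1 : ℚ) * cb_s14 (m + 1) = (4 * m + 2) * cb_s14 m := by
  have h := Nat.succ_mul_centralBinom_succ m
  simp only [Nat.centralBinom_eq_two_mul_choose] at h
  have h2 := congrArg (Nat.cast : ℕ → ℚ) h
  push_cast at h2
  unfold cb_s14
  push_cast
  linarith

private lemma jchoose (j k : ℕ) :
    (j : ℚ) * (j.choose k : ℚ) = k * (j.choose k : ℚ) + (k + 1) * (j.choose (k + 1) : ℚ) := by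
  rcases le_or_gt k j with hk | hk
  · have h := Nat.choose_succ_right_eq j k
    have h2 := congrArg (Nat.cast : ℕ → ℚ) h
    push_cast [Nat.cast_sub hk] at h2
    linarith
  · rw [Nat.choose_eq_zero_of_lt hk, Nat.choose_eq_zero_of_lt (by omega)]
    push_cast; ring

private noncomputable def TT (n k : ℕ) : ℚ :=
  ∑ j ∈ range (n + 1), cb_s14 j * cb_s14 (n - j) * (Nat.choose j k : ℚ)

private lemma TT_zero_of_lt {n k : ℕ} (h : n < k) : TT n k = 0 := by
  apply Finset.sum_eq_zero
  intro j hj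
  rw [Nat.choose_eq_zero_of_lt (by simp at hj; omega)]
  ring

private lemma TT_diag (n : ℕ) : TT n n = cb_s14 n := by
  rw [TT, Finset.sum_range_succ, Finset.sum_eq_zero, Nat.sub_self, Nat.choose_self]
  · simp [cb_s14]
  · intro j hj
    rw [Nat.choose_eq_zero_of_lt (by simp at hj; omega)]
    ring

private lemma Vsum_eq (n k : ℕ) :
    ∑ j ∈ range (n + 1), (j : ℚ) * (cb_s14 j * cb_s14 (n - j) * (Nat.choose j k : ℚ)) =
      k * TT n k + (k + 1) * TT n (k + 1) := by
  rw [TT, TT, Finset.mul_sum, Finset.mul_sum, ← Finset.sum_add_distrib]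
  apply Finset.sum_congr rfl
  intro j _
  have h := jchoose j k
  linear_combination (cb_s14 j * cb_s14 (n - j)) * h

private lemma nT_split (n k : ℕ) :
    (n : ℚ) * TT n k =
      (∑ j ∈ range (n + 1), (j : ℚ) * (cb_s14 j * cb_s14 (n - j) * (Nat.choose j k : ℚ))) +
      ∑ j ∈ range (n + 1), ((n - j : ℕ) : ℚ) * (cb_s14 j * cb_s14 (n - j) * (Nat.choose j k : ℚ)) := by
  rw [TT, Finset.mul_sum, ← Finset.sum_add_distrib]
  apply Finset.sum_congr rfl
  intro j hj
  have hjn : j ≤ n := by simp at hj; omega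
  have : ((n - j : ℕ) : ℚ) = (n : ℚ) - j := by push_cast [Nat.cast_sub hjn]; ring
  rw [this]; ring

private lemma Wsum_rec (m k : ℕ) :
    ∑ j ∈ range (m + 2), ((m + 1 - j : ℕ) : ℚ) * (cb_s14 j * cb_s14 (m + 1 - j) * (Nat.choose j k : ℚ)) =
      4 * (∑ j ∈ range (m + 1), ((m - j : ℕ) : ℚ) * (cb_s14 j * cb_s14 (m - j) * (Nat.choose j k : ℚ)))
        + 2 * TT m k := by
  rw [Finset.sum_range_succ, Nat.sub_self]
  simp only [Nat.cast_zero, zero_mul, add_zero]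
  rw [TT, Finset.mul_sum, Finset.mul_sum, ← Finset.sum_add_distrib]
  apply Finset.sum_congr rfl
  intro j hj
  have hjm : j ≤ m := by simp at hj; omega
  have h1 : m + 1 - j = (m - j) + 1 := by omega
  rw [h1]
  have key := cb_succ (m - j)
  have hc : (((m - j) + 1 : ℕ) : ℚ) = ((m - j : ℕ) : ℚ) + 1 := by push_cast; ring
  rw [hc]
  linear_combination (cb_s14 j * (Nat.choose j k : ℚ)) * key

private lemma master (m k : ℕ) :
    ((m : ℚ) + 1) * TT (m + 1) k =
      k * TT (m + 1) k + (k + 1) * TT (m + 1) (k + 1)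
        + 4 * (((m : ℚ) - k) * TT m k - (k + 1) * TT m (k + 1)) + 2 * TT m k := by
  have A1 := nT_split (m + 1) k
  have A0 := nT_split m k
  have C1 := Vsum_eq (m + 1) k
  have C0 := Vsum_eq m k
  have B := Wsum_rec m k
  push_cast at A1
  linarith [A1, A0, C1, C0, B]

private lemma T_eq : ∀ n k, TT n k = 4 ^ (n - k) * cb_s14 k * (Nat.choose n k : ℚ) := by
  intro n
  induction n with
  | zero =>
    intro k
    match k with
    | 0 => simp [TT, cb_s14]
    | k + 1 => rw [TT_zero_of_lt (by omega)]; simp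
  | succ m ih =>
    have aux : ∀ t k, m + 1 ≤ k + t →
        TT (m + 1) k = 4 ^ (m + 1 - k) * cb_s14 k * (Nat.choose (m + 1) k : ℚ) := by
      intro t
      induction t with
      | zero =>
        intro k hk
        rcases eq_or_lt_of_le (show m + 1 ≤ k by omega) with h | h
        · subst h; rw [TT_diag]; simp
        · rw [TT_zero_of_lt h, Nat.choose_eq_zero_of_lt h]; ring
      | succ t iht =>
        intro k hk
        by_cases h : m + 1 ≤ k + t
        · exact iht k h
        · have hkm : k ≤ m := by omega
          have hM := master m k
          rw [iht (k + 1) (by omega), ih k, ih (k + 1)] at hM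
          have hne : ((m : ℚ) + 1 - k) ≠ 0 := by
            have : (k : ℚ) ≤ m := by exact_mod_cast hkm
            linarith
          have hX : ((m : ℚ) + 1 - k) * TT (m + 1) k =
              (k + 1) * (4 ^ (m + 1 - (k + 1)) * cb_s14 (k + 1) * (Nat.choose (m + 1) (k + 1) : ℚ))
              + 4 * (((m : ℚ) - k) * (4 ^ (m - k) * cb_s14 k * (Nat.choose m k : ℚ))
                  - (k + 1) * (4 ^ (m - (k + 1)) * cb_s14 (k + 1) * (Nat.choose m (k + 1) : ℚ)))
              + 2 * (4 ^ (m - k) * cb_s14 k * (Nat.choose m k : ℚ)) := by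
            linarith [hM]
          have hgoal : ((m : ℚ) + 1 - k) * (4 ^ (m + 1 - k) * cb_s14 k * (Nat.choose (m + 1) k : ℚ)) =
              (k + 1) * (4 ^ (m + 1 - (k + 1)) * cb_s14 (k + 1) * (Nat.choose (m + 1) (k + 1) : ℚ))
              + 4 * (((m : ℚ) - k) * (4 ^ (m - k) * cb_s14 k * (Nat.choose m k : ℚ))
                  - (k + 1) * (4 ^ (m - (k + 1)) * cb_s14 (k + 1) * (Nat.choose m (k + 1) : ℚ)))
              + 2 * (4 ^ (m - k) * cb_s14 k * (Nat.choose m k : ℚ)) := by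
            obtain ⟨d, hd⟩ : ∃ d, m = k + d := ⟨m - k, by omega⟩
            subst hd
            have F1 := cb_succ k
            have F2 : (Nat.choose (k + d + 1) (k + 1) : ℚ) =
                (Nat.choose (k + d) k : ℚ) + (Nat.choose (k + d) (k + 1) : ℚ) := by
              rw [Nat.choose_succ_succ (k + d) k]
              push_cast; ring
            have F3 : ((k : ℚ) + d + 1 - k) * (Nat.choose (k + d + 1) k : ℚ) =
                ((k : ℚ) + d + 1) * (Nat.choose (k + d) k : ℚ) := by
              have ha := Nat.choose_succ_right_eq (k + d + 1) k
              have hb := Nat.add_one_mul_choose_eq (k + d) k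
              have ha2 := congrArg (Nat.cast : ℕ → ℚ) ha
              have hb2 := congrArg (Nat.cast : ℕ → ℚ) hb
              push_cast [Nat.cast_sub (show k ≤ k + d + 1 by omega)] at ha2 hb2
              linarith
            rcases Nat.eq_zero_or_pos d with hd0 | hd0
            · subst hd0
              have hB : (Nat.choose (k + 0) (k + 1) : ℚ) = 0 := by
                rw [Nat.choose_eq_zero_of_lt (by omega)]; norm_num
              rw [show k + 0 + 1 - (k + 1) = 0 by omega, show k + 0 - (k + 1) = 0 by omega,
                show k + 0 + 1 - k = 1 by omega, show k + 0 - k = 0 by omega]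
              push_cast at F1 F2 F3 hB ⊢
              linear_combination (4 * cb_s14 k) * F3 - (((k : ℚ) + 1) * cb_s14 (k + 1)) * F2
                - (Nat.choose (k + 0) k : ℚ) * F1 + (3 * ((k : ℚ) + 1) * cb_s14 (k + 1)) * hB
            · obtain ⟨e, rfl⟩ : ∃ e, d = e + 1 := ⟨d - 1, by omega⟩
              have e1 : k + 1 + (e + 1) - (k + 1) = e + 1 := by omega
              have e2 : k + (e + 1) - (k + 1) = e := by omega
              have e3 : k + (e + 1) + 1 - k = e + 2 := by omega
              have e4 : k + (e + 1) - k = e + 1 := by omega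
              rw [show k + (e + 1) + 1 - (k + 1) = e + 1 by omega, e2, e3, e4]
              push_cast at F1 F2 F3 ⊢
              linear_combination (16 * (4:ℚ) ^ e * cb_s14 k) * F3
                - (4 * (4:ℚ) ^ e * ((k : ℚ) + 1) * cb_s14 (k + 1)) * F2
                - (4 * (4:ℚ) ^ e * (Nat.choose (k + (e + 1)) k : ℚ)) * F1
          exact mul_left_cancel₀ hne (hX.trans hgoal.symm)
    intro k
    exact aux (m + 1) k (by omega)

/-- For every `n ≥ 1` and every rational `x`:
`4^n·∑_{k=0}^n C(2k,k)·C(n,k)·(−x)^k = ∑_{j=0}^n C(2j,j)·C(2(n−j),n−j)·(1−4x)^j`. -/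
theorem stmt_14 (n : ℕ) (hn : 0 < n) (x : ℚ) :
    4 ^ n * ∑ k ∈ Finset.range (n + 1),
        (Nat.choose (2 * k) k : ℚ) * (Nat.choose n k : ℚ) * (-x) ^ k =
      ∑ j ∈ Finset.range (n + 1),
        (Nat.choose (2 * j) j : ℚ) * (Nat.choose (2 * (n - j)) (n - j) : ℚ) *
          (1 - 4 * x) ^ j := by
  have LHS_eq : ∀ k ∈ range (n + 1),
      4 ^ n * ((Nat.choose (2 * k) k : ℚ) * (Nat.choose n k : ℚ) * (-x) ^ k) =
        (-(4 * x)) ^ k * TT n k := by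
    intro k hk
    have hkn : k ≤ n := by simp at hk; omega
    rw [T_eq n k]
    have h4 : (4 : ℚ) ^ n = 4 ^ (n - k) * 4 ^ k := by
      rw [← pow_add]; congr 1; omega
    have h5 : (-(4 * x)) ^ k = 4 ^ k * (-x) ^ k := by
      rw [← mul_pow]; congr 1; ring
    rw [h4, h5, cb_s14]
    ring
  have RHS_eq : ∀ j ∈ range (n + 1),
      (Nat.choose (2 * j) j : ℚ) * (Nat.choose (2 * (n - j)) (n - j) : ℚ) * (1 - 4 * x) ^ j =
        ∑ k ∈ range (n + 1), cb_s14 j * cb_s14 (n - j) * ((Nat.choose j k : ℚ) * (-(4 * x)) ^ k) := by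
    intro j hj
    have hjn : j ≤ n := by simp at hj; omega
    rw [show (1 - 4 * x : ℚ) = -(4 * x) + 1 by ring, add_pow, Finset.mul_sum]
    rw [show (Nat.choose (2 * j) j : ℚ) * (Nat.choose (2 * (n - j)) (n - j) : ℚ) = cb_s14 j * cb_s14 (n - j)
      from rfl]
    have h1 : ∑ i ∈ range (j + 1),
        cb_s14 j * cb_s14 (n - j) * ((-(4 * x)) ^ i * 1 ^ (j - i) * (Nat.choose j i : ℚ)) =
        ∑ i ∈ range (j + 1), cb_s14 j * cb_s14 (n - j) * ((Nat.choose j i : ℚ) * (-(4 * x)) ^ i) :=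
      Finset.sum_congr rfl (fun i _ => by rw [one_pow]; ring)
    rw [h1]
    apply Finset.sum_subset (by rw [Finset.range_subset_range]; omega)
    intro i hi1 hi2
    rw [Nat.choose_eq_zero_of_lt (by simp at hi2; omega)]
    push_cast; ring
  rw [Finset.mul_sum, Finset.sum_congr rfl LHS_eq, Finset.sum_congr rfl RHS_eq, Finset.sum_comm]
  apply Finset.sum_congr rfl
  intro k _
  rw [TT, Finset.mul_sum]
  apply Finset.sum_congr rfl
  intro j _
  ring
end

section
/- For every positive integer n: 4^{n−1}·∑_{k=0}^{n−1} (−1)^k·C(2k,k)·C(n−1,k) = ∑_{k=0}^{n−1} (−3)^k·C(2k,k)·C(2(n−1−k), n−1−k). -/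
open Polynomial

lemma qchoose_succ (r : ℚ) (k : ℕ) :
    Ring.choose r (k + 1) * (k + 1) = Ring.choose r k * (r - k) := by
  have h1 := Ring.descPochhammer_eq_factorial_smul_choose (R := ℚ) r (k + 1)
  have h2 := Ring.descPochhammer_eq_factorial_smul_choose (R := ℚ) r k
  rw [descPochhammer_succ_right, smeval_mul, h2, smeval_sub, smeval_X, smeval_natCast] at h1
  simp only [nsmul_eq_mul, Nat.factorial_succ, Nat.cast_mul, Nat.cast_add, Nat.cast_one,
    pow_one, pow_zero, mul_one] at h1
  have hk : (k.factorial : ℚ) ≠ 0 := by positivity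
  apply mul_left_cancel₀ hk
  rw [show (k.factorial:ℚ) * (Ring.choose r (k+1) * ((k:ℚ)+1)) =
      ((k:ℚ)+1) * (k.factorial:ℚ) * Ring.choose r (k+1) by ring, ← h1]; ring

lemma qchoose_half (k : ℕ) :
    Ring.choose (-(1/2) : ℚ) k = (-(1/4))^k * ((2*k).choose k : ℚ) := by
  induction k with
  | zero => simp [Ring.choose_zero_right]
  | succ k ih =>
    have hrec := qchoose_succ (-(1/2) : ℚ) k
    rw [ih] at hrec
    have hnat : ((k+1) : ℚ) * ((2*(k+1)).choose (k+1) : ℚ)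
        = 2 * (2*k+1) * ((2*k).choose k : ℚ) := by
      have := Nat.succ_mul_centralBinom_succ k
      have h2 : (k+1) * Nat.centralBinom (k+1) = 2 * (2*k+1) * Nat.centralBinom k := this
      rw [Nat.centralBinom, Nat.centralBinom] at h2
      exact_mod_cast congrArg (Nat.cast : ℕ → ℚ) h2
    have hk1 : ((k:ℚ)+1) ≠ 0 := by positivity
    apply mul_right_cancel₀ hk1
    push_cast at hrec hnat ⊢
    rw [hrec]
    linear_combination (-(-(1/4):ℚ)^(k+1)) * hnat

lemma qchoose_negnat (i t : ℕ) :
    Ring.choose (-1 - (i:ℚ)) t = (-1)^t * ((i+t).choose t : ℚ) := by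
  induction t with
  | zero => simp [Ring.choose_zero_right]
  | succ t ih =>
    have hrec := qchoose_succ (-1 - (i:ℚ)) t
    rw [ih] at hrec
    have hnat : ((i+t+1 : ℕ) : ℚ) * ((i+t).choose t : ℚ)
        = ((i+t+1).choose (t+1) : ℚ) * ((t+1 : ℕ) : ℚ) := by
      exact_mod_cast congrArg (Nat.cast : ℕ → ℚ) (Nat.add_one_mul_choose_eq (i+t) t)
    have hk1 : ((t:ℚ)+1) ≠ 0 := by positivity
    apply mul_right_cancel₀ hk1
    push_cast at hrec hnat ⊢
    rw [hrec, show i + (t+1) = i + t + 1 from (add_assoc i t 1).symm]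
    linear_combination ((-1:ℚ)^(t+1)) * hnat

lemma qvander (r s : ℚ) (k : ℕ) :
    ∑ t ∈ Finset.range (k+1), Ring.choose r t * Ring.choose s (k - t)
      = Ring.choose (r + s) k := by
  rw [Ring.add_choose_eq k (Commute.all r s), Finset.Nat.sum_antidiagonal_eq_sum_range_succ_mk]

lemma qtrinom (r : ℚ) (j i : ℕ) (h : i ≤ j) :
    (j.choose i : ℚ) * Ring.choose r j = Ring.choose r i * Ring.choose (r - i) (j - i) := by
  have := Ring.choose_smul_choose r (n := j) (k := i) h
  simpa [nsmul_eq_mul] using this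

lemma qcentral (j : ℕ) : ((2*j).choose j : ℚ) = (-4)^j * Ring.choose (-(1/2) : ℚ) j := by
  rw [qchoose_half, ← mul_assoc, ← mul_pow]
  norm_num

lemma star (i m : ℕ) (him : i ≤ m) :
    ∑ j ∈ Finset.range (m+1),
        ((2*j).choose j : ℚ) * (j.choose i : ℚ) * ((2*(m-j)).choose (m-j) : ℚ)
      = 4^(m-i) * ((2*i).choose i : ℚ) * (m.choose i : ℚ) := by
  have h1 : ∑ j ∈ Finset.range (m+1),
        ((2*j).choose j : ℚ) * (j.choose i : ℚ) * ((2*(m-j)).choose (m-j) : ℚ)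
      = ∑ j ∈ Finset.Ico i (m+1),
        ((2*j).choose j : ℚ) * (j.choose i : ℚ) * ((2*(m-j)).choose (m-j) : ℚ) := by
    rw [Finset.range_eq_Ico]
    apply (Finset.sum_subset (Finset.Ico_subset_Ico (Nat.zero_le i) le_rfl) _).symm
    intro j hjm hj
    simp only [Finset.mem_Ico] at hjm hj
    have : j < i := by omega
    rw [Nat.choose_eq_zero_of_lt this]
    ring
  rw [h1, Finset.sum_Ico_eq_sum_range]
  have hlen : m + 1 - i = (m - i) + 1 := by omega
  rw [hlen]
  have h2 : ∀ t ∈ Finset.range ((m-i)+1),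
      ((2*(i+t)).choose (i+t) : ℚ) * ((i+t).choose i : ℚ)
        * ((2*(m-(i+t))).choose (m-(i+t)) : ℚ)
      = ((-4)^m * Ring.choose (-(1/2) : ℚ) i)
          * (Ring.choose (-(1/2) - i : ℚ) t * Ring.choose (-(1/2) : ℚ) ((m-i) - t)) := by
    intro t ht
    have htm : i + t ≤ m := by
      simp only [Finset.mem_range] at ht; omega
    have hsub : m - (i+t) = (m-i) - t := by omega
    rw [qcentral (i+t), qcentral (m-(i+t)), hsub]
    have htri := qtrinom (-(1/2) : ℚ) (i+t) i (Nat.le_add_right i t)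
    rw [Nat.add_sub_cancel_left] at htri
    have hpow : ((-4:ℚ))^(i+t) * (-4)^((m-i)-t) = (-4)^m := by
      rw [← pow_add]; congr 1; omega
    linear_combination (((-4:ℚ))^(i+t) * (-4)^((m-i)-t)
        * Ring.choose (-(1/2) : ℚ) ((m-i)-t)) * htri
      + (Ring.choose (-(1/2) : ℚ) i * Ring.choose (-(1/2) - i : ℚ) t
        * Ring.choose (-(1/2) : ℚ) ((m-i)-t)) * hpow
  have hadd : (-(1/2) : ℚ) - i + -(1/2) = -1 - i := by ring
  rw [Finset.sum_congr rfl h2, ← Finset.mul_sum, qvander, hadd, qchoose_negnat, qchoose_half,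
    Nat.add_sub_cancel' him, Nat.choose_symm him,
    show ((-4:ℚ))^m = (-4)^i * (-4)^(m-i) from by rw [← pow_add]; congr 1; omega]
  have key1 : ((-4:ℚ))^i * (-(1/4))^i = 1 := by rw [← mul_pow]; norm_num
  have key2 : ((-4:ℚ))^(m-i) * (-1)^(m-i) = 4^(m-i) := by rw [← mul_pow]; norm_num
  linear_combination (((2*i).choose i : ℚ) * (m.choose i : ℚ)
      * ((-4:ℚ))^(m-i) * (-1)^(m-i)) * key1
    + (((2*i).choose i : ℚ) * (m.choose i : ℚ)) * key2

lemma main_q (m : ℕ) :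
    4^m * ∑ k ∈ Finset.range (m+1), (-1)^k * ((2*k).choose k : ℚ) * (m.choose k : ℚ)
      = ∑ j ∈ Finset.range (m+1),
          (-3)^j * ((2*j).choose j : ℚ) * ((2*(m-j)).choose (m-j) : ℚ) := by
  have hR : ∀ j ∈ Finset.range (m+1),
      (-3:ℚ)^j * ((2*j).choose j : ℚ) * ((2*(m-j)).choose (m-j) : ℚ)
        = ∑ i ∈ Finset.range (m+1), (-4:ℚ)^i
            * (((2*j).choose j : ℚ) * (j.choose i : ℚ) * ((2*(m-j)).choose (m-j) : ℚ)) := by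
    intro j hj
    simp only [Finset.mem_range] at hj
    rw [show (-3:ℚ) = -4 + 1 by norm_num, add_pow]
    simp only [one_pow, mul_one]
    rw [Finset.sum_mul, Finset.sum_mul]
    calc ∑ i ∈ Finset.range (j+1),
            (-4:ℚ)^i * (j.choose i : ℚ) * ((2*j).choose j : ℚ) * ((2*(m-j)).choose (m-j) : ℚ)
        = ∑ i ∈ Finset.range (j+1), (-4:ℚ)^i
            * (((2*j).choose j : ℚ) * (j.choose i : ℚ) * ((2*(m-j)).choose (m-j) : ℚ)) := by
          apply Finset.sum_congr rfl; intro i _; ring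
      _ = _ := by
          apply Finset.sum_subset (by rw [Finset.range_subset_range]; omega)
          intro i _ hi
          simp only [Finset.mem_range] at hi
          have hji : j < i := by omega
          rw [Nat.choose_eq_zero_of_lt hji]
          ring
  rw [Finset.sum_congr rfl hR, Finset.sum_comm, Finset.mul_sum]
  apply Finset.sum_congr rfl
  intro i hi
  simp only [Finset.mem_range] at hi
  have him : i ≤ m := by omega
  rw [← Finset.mul_sum, star i m him,
    show ((-4:ℚ))^i = (-1)^i * 4^i by rw [← mul_pow]; norm_num,
    show (4:ℚ)^m = 4^i * 4^(m-i) from by rw [← pow_add]; congr 1; omega]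
  ring

theorem stmt_15 (n : ℕ) (hn : 0 < n) :
    4 ^ (n - 1) * ∑ k ∈ Finset.range n,
        (-1) ^ k * (Nat.choose (2 * k) k : ℤ) * (Nat.choose (n - 1) k : ℤ) =
      ∑ k ∈ Finset.range n,
        (-3) ^ k * (Nat.choose (2 * k) k : ℤ) *
          (Nat.choose (2 * (n - 1 - k)) (n - 1 - k) : ℤ) := by
  obtain ⟨m, rfl⟩ : ∃ m, n = m + 1 := ⟨n - 1, by omega⟩
  simp only [Nat.add_sub_cancel]
  exact_mod_cast main_q m
end

section
/- The series ∑_{k=0}^{∞} (−3)^k/(2k+1) converges to 0 in the 3-adic numbers ℚ₃ (more precisely, in the completion of the algebraic closure of ℚ₃, since its value equals (1/(2√−3))·log₃((√−3 − 1)/2) and (√−3 − 1)/2 is a primitive cube root of unity). -/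
noncomputable section
namespace P3A

abbrev K := ℚ_[3]

/-- `K[√-3]` as pairs `a + b√-3`. -/
@[ext] structure L where
  re : K
  im : K

namespace L

instance : Zero L := ⟨⟨0, 0⟩⟩
instance : One L := ⟨⟨1, 0⟩⟩
instance : Add L := ⟨fun x y => ⟨x.re + y.re, x.im + y.im⟩⟩
instance : Neg L := ⟨fun x => ⟨-x.re, -x.im⟩⟩
instance : Mul L := ⟨fun x y => ⟨x.re * y.re - 3 * (x.im * y.im), x.re * y.im + x.im * y.re⟩⟩

@[simp] lemma zero_re : (0 : L).re = 0 := rfl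
@[simp] lemma zero_im : (0 : L).im = 0 := rfl
@[simp] lemma one_re : (1 : L).re = 1 := rfl
@[simp] lemma one_im : (1 : L).im = 0 := rfl
@[simp] lemma add_re (x y : L) : (x + y).re = x.re + y.re := rfl
@[simp] lemma add_im (x y : L) : (x + y).im = x.im + y.im := rfl
@[simp] lemma neg_re (x : L) : (-x).re = -x.re := rfl
@[simp] lemma neg_im (x : L) : (-x).im = -x.im := rfl
@[simp] lemma mul_re (x y : L) : (x * y).re = x.re * y.re - 3 * (x.im * y.im) := rfl
@[simp] lemma mul_im (x y : L) : (x * y).im = x.re * y.im + x.im * y.re := rfl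

instance commRing : CommRing L where
  add_assoc := by intros; ext <;> simp <;> ring
  zero_add := by intros; ext <;> simp
  add_zero := by intros; ext <;> simp
  add_comm := by intros; ext <;> simp <;> ring
  neg_add_cancel := by intros; ext <;> simp
  mul_assoc := by intros; ext <;> simp <;> ring
  one_mul := by intros; ext <;> simp
  mul_one := by intros; ext <;> simp
  left_distrib := by intros; ext <;> simp <;> ring
  right_distrib := by intros; ext <;> simp <;> ring
  mul_comm := by intros; ext <;> simp <;> ring
  zero_mul := by intros; ext <;> simp
  mul_zero := by intros; ext <;> simp
  nsmul := fun n x => ⟨n • x.re, n • x.im⟩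
  nsmul_zero := by intros; ext <;> exact zero_smul ℕ _
  nsmul_succ := by intros; ext <;> exact succ_nsmul _ _
  zsmul := fun n x => ⟨n • x.re, n • x.im⟩
  zsmul_zero' := by intros; ext <;> exact zero_smul ℤ _
  zsmul_succ' := by
    intro n a
    ext
    · exact add_one_zsmul a.re (n : ℤ)
    · exact add_one_zsmul a.im (n : ℤ)
  zsmul_neg' := by intros; ext <;> exact negSucc_zsmul _ _

/-- inclusion of `K` -/
def CL : K →+* L where
  toFun a := ⟨a, 0⟩
  map_one' := rfl
  map_mul' := by intros; ext <;> simp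
  map_zero' := rfl
  map_add' := by intros; ext <;> simp

@[simp] lemma CL_re (a : K) : (CL a).re = a := rfl
@[simp] lemma CL_im (a : K) : (CL a).im = 0 := rfl

instance : Algebra ℚ L := (CL.comp (Rat.castHom K)).toAlgebra

lemma algebraMap_eq (q : ℚ) : algebraMap ℚ L q = CL (q : K) := rfl



lemma norm_add_sq_le (a b : K) : ‖a + b‖^2 ≤ max (‖a‖^2) (‖b‖^2) := by
  have h := Padic.nonarchimedean a b
  rcases le_total ‖a‖ ‖b‖ with h1 | h1
  · exact le_max_of_le_right (pow_le_pow_left₀ (norm_nonneg _)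
      (le_trans h (max_le h1 le_rfl)) 2)
  · exact le_max_of_le_left (pow_le_pow_left₀ (norm_nonneg _)
      (le_trans h (max_le le_rfl h1)) 2)

lemma norm_three : ‖(3 : K)‖ = 1/3 := by
  have := @Padic.norm_p 3 ⟨by norm_num⟩
  rw [show ((3:ℕ) : K) = (3 : K) by norm_cast] at this
  rw [this]; norm_num

lemma norm_two : ‖(2 : K)‖ = 1 := by
  have h1 : ‖((2:ℤ) : K)‖ ≤ 1 := Padic.norm_int_le_one 2
  have h2 : ¬ ‖((2:ℤ) : K)‖ < 1 := by
    rw [Padic.norm_intCast_lt_one_iff]; norm_num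
  push_cast at h1 h2
  linarith [lt_or_eq_of_le h1]

lemma norm_natCast_le_one (n : ℕ) : ‖((n : K))‖ ≤ 1 := by
  have := Padic.norm_int_le_one (p := 3) n
  push_cast at this; exact this

lemma norm_natCast_ge (n : ℕ) (hn : 0 < n) : (1:ℝ) ≤ n * ‖((n : K))‖ := by
  have hle : (3:ℕ)^(padicValNat 3 n) ≤ n := Nat.le_of_dvd hn pow_padicValNat_dvd
  have hnz : ((n : K)) ≠ 0 := Nat.cast_ne_zero.mpr hn.ne'
  rw [Padic.norm_eq_zpow_neg_valuation hnz, Padic.valuation_natCast, zpow_neg, zpow_natCast]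
  have h3 : ((3:ℝ))^(padicValNat 3 n) ≤ (n:ℝ) := by exact_mod_cast hle
  have hp : (0:ℝ) < 3^(padicValNat 3 n) := by positivity
  rw [le_mul_inv_iff₀ (by positivity), one_mul]
  exact_mod_cast h3


/-- square of the natural multiplicative norm on `L` -/
def nn (x : L) : ℝ := max (‖x.re‖^2) (‖x.im‖^2 / 3)

lemma nn_nonneg (x : L) : 0 ≤ nn x := le_max_of_le_left (by positivity)

@[simp] lemma nn_zero : nn (0 : L) = 0 := by simp [nn]

lemma nn_neg (x : L) : nn (-x) = nn x := by simp [nn]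

lemma nn_add_le (x y : L) : nn (x + y) ≤ max (nn x) (nn y) := by
  have h1 := norm_add_sq_le x.re y.re
  have h2 := norm_add_sq_le x.im y.im
  simp only [nn, add_re, add_im]
  apply max_le
  · exact h1.trans (max_le (le_max_of_le_left (le_max_left _ _))
      (le_max_of_le_right (le_max_left _ _)))
  · have h3 : ‖x.im + y.im‖^2/3 ≤ max (‖x.im‖^2) (‖y.im‖^2) / 3 := by
      exact div_le_div_of_nonneg_right h2 (by norm_num)
    rcases le_total (‖x.im‖^2) (‖y.im‖^2) with h | h
    · refine (h3.trans ?_)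
      rw [max_eq_right h]
      exact le_max_of_le_right (le_max_right _ _)
    · refine (h3.trans ?_)
      rw [max_eq_left h]
      exact le_max_of_le_left (le_max_right _ _)

lemma nn_mul_le (x y : L) : nn (x * y) ≤ nn x * nn y := by
  have hxA : ‖x.re‖^2 ≤ nn x := le_max_left _ _
  have hxB : ‖x.im‖^2/3 ≤ nn x := le_max_right _ _
  have hyC : ‖y.re‖^2 ≤ nn y := le_max_left _ _
  have hyD : ‖y.im‖^2/3 ≤ nn y := le_max_right _ _
  have hAC : ‖x.re‖^2 * ‖y.re‖^2 ≤ nn x * nn y :=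
    mul_le_mul hxA hyC (by positivity) (nn_nonneg x)
  have hBD : (‖x.im‖^2/3) * (‖y.im‖^2/3) ≤ nn x * nn y :=
    mul_le_mul hxB hyD (by positivity) (nn_nonneg x)
  have hAD : ‖x.re‖^2 * (‖y.im‖^2/3) ≤ nn x * nn y :=
    mul_le_mul hxA hyD (by positivity) (nn_nonneg x)
  have hBC : (‖x.im‖^2/3) * ‖y.re‖^2 ≤ nn x * nn y :=
    mul_le_mul hxB hyC (by positivity) (nn_nonneg x)
  simp only [nn, mul_re, mul_im]
  apply max_le
  · have h := norm_add_sq_le (x.re*y.re) (-(3*(x.im*y.im)))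
    rw [← sub_eq_add_neg] at h
    refine h.trans (max_le ?_ ?_)
    · rw [norm_mul, mul_pow]; exact hAC
    · rw [norm_neg, norm_mul, norm_mul, norm_three, mul_pow, mul_pow]
      calc (1/3:ℝ)^2 * (‖x.im‖^2 * ‖y.im‖^2) = (‖x.im‖^2/3) * (‖y.im‖^2/3) := by ring
        _ ≤ nn x * nn y := hBD
  · have h := norm_add_sq_le (x.re*y.im) (x.im*y.re)
    have h' : ‖x.re * y.im + x.im * y.re‖^2/3 ≤
        max (‖x.re * y.im‖^2) (‖x.im * y.re‖^2) / 3 :=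
      div_le_div_of_nonneg_right h (by norm_num)
    refine h'.trans ?_
    rw [← max_div_div_right (by norm_num : (0:ℝ) ≤ 3)]
    apply max_le
    · calc ‖x.re * y.im‖^2/3 = ‖x.re‖^2 * (‖y.im‖^2/3) := by rw [norm_mul, mul_pow]; ring
        _ ≤ nn x * nn y := hAD
    · calc ‖x.im * y.re‖^2/3 = (‖x.im‖^2/3) * ‖y.re‖^2 := by rw [norm_mul, mul_pow]; ring
        _ ≤ nn x * nn y := hBC
lemma nn_C_mul (a : K) (x : L) : nn (CL a * x) = ‖a‖^2 * nn x := by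
  simp only [nn, mul_re, mul_im, CL_re, CL_im, zero_mul, mul_zero, sub_zero, add_zero,
    zero_add, norm_mul, mul_pow]
  rw [mul_max_of_nonneg _ _ (by positivity : (0:ℝ) ≤ ‖a‖^2)]
  ring_nf

lemma nn_one_le : nn (1 : L) ≤ 1 := by simp [nn]

lemma nn_pow_le (x : L) (n : ℕ) : nn (x ^ n) ≤ nn x ^ n := by
  induction n with
  | zero => simpa using nn_one_le
  | succ n ih =>
    rw [pow_succ, pow_succ]
    exact (nn_mul_le _ _).trans (mul_le_mul_of_nonneg_right ih (nn_nonneg x)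
      |>.trans (le_refl _)) |>.trans (by
        exact mul_le_mul_of_nonneg_right (le_refl _) (nn_nonneg x))

lemma nn_sum_le {ι : Type*} (s : Finset ι) (f : ι → L) (C : ℝ) (hC : 0 ≤ C)
    (h : ∀ i ∈ s, nn (f i) ≤ C) : nn (∑ i ∈ s, f i) ≤ C := by
  classical
  induction s using Finset.induction_on with
  | empty => simpa using hC
  | insert a s hne ih =>
    rw [Finset.sum_insert hne]
    refine (nn_add_le _ _).trans (max_le (h a (Finset.mem_insert_self a s)) ?_)
    exact ih fun i hi => h i (Finset.mem_insert_of_mem hi)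

end L

open MvPolynomial

abbrev P := MvPolynomial (Fin 2) ℚ

def XX : P := X 0
def YY : P := X 1
def ZZ : P := XX + YY + XX * YY

/-- truncated `log(1+t)` -/
def LP (M : ℕ) (p : P) : P :=
  ∑ k ∈ Finset.range M, C ((-1)^k / (k+1) : ℚ) * p ^ (k+1)

def HH (M : ℕ) : P := LP M XX + LP M YY - LP M ZZ

def deg (m : Fin 2 →₀ ℕ) : ℕ := m 0 + m 1

/-- all monomials of `p` have total degree `≥ k` -/
def Low (k : ℕ) (p : P) : Prop := ∀ m : Fin 2 →₀ ℕ, deg m < k → coeff m p = 0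

lemma Low.mono {k l : ℕ} (h : l ≤ k) {p : P} (hp : Low k p) : Low l p :=
  fun m hm => hp m (lt_of_lt_of_le hm h)

lemma Low.add {k : ℕ} {p q : P} (hp : Low k p) (hq : Low k q) : Low k (p + q) := by
  intro m hm; rw [coeff_add, hp m hm, hq m hm, add_zero]

lemma Low.neg {k : ℕ} {p : P} (hp : Low k p) : Low k (-p) := by
  intro m hm; rw [coeff_neg, hp m hm, neg_zero]

lemma Low.mul {k l : ℕ} {p q : P} (hp : Low k p) (hq : Low l q) : Low (k + l) (p * q) := by
  intro m hm
  classical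
  rw [coeff_mul]
  apply Finset.sum_eq_zero
  rintro ⟨u, v⟩ huv
  rw [Finset.HasAntidiagonal.mem_antidiagonal] at huv
  have hdeg : deg u + deg v = deg m := by
    simp only [deg, ← huv, Finsupp.add_apply]; ring
  by_cases hu : deg u < k
  · rw [hp u hu, zero_mul]
  · have hv : deg v < l := by omega
    rw [hq v hv, mul_zero]

lemma Low.sum {k : ℕ} {ι : Type*} (s : Finset ι) (f : ι → P)
    (h : ∀ i ∈ s, Low k (f i)) : Low k (∑ i ∈ s, f i) := by
  intro m hm
  rw [coeff_sum]
  exact Finset.sum_eq_zero fun i hi => h i hi m hm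

lemma Low_X (i : Fin 2) : Low 1 (X i : P) := by
  intro m hm
  rw [coeff_X']
  split_ifs with h
  · exfalso
    subst h
    fin_cases i <;> simp [deg] at hm
  · rfl

lemma Low_XX : Low 1 XX := Low_X 0
lemma Low_YY : Low 1 YY := Low_X 1

lemma Low_ZZ : Low 1 ZZ := by
  have := (Low_XX.mul Low_YY).mono (l := 1) (by norm_num)
  exact (Low_XX.add Low_YY).add this

lemma Low.pow {k : ℕ} {p : P} (hp : Low k p) (n : ℕ) : Low (n * k) (p ^ n) := by
  induction n with
  | zero => intro m hm; omega
  | succ n ih =>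
    rw [pow_succ]
    have := ih.mul hp
    simpa [add_mul, one_mul] using this

lemma coeff_pderiv (i : Fin 2) (p : P) (m : Fin 2 →₀ ℕ) :
    coeff m (pderiv i p) = coeff (m + Finsupp.single i 1) p * ((m i : ℚ) + 1) := by
  induction p using MvPolynomial.induction_on' with
  | add p q hp hq => rw [map_add, coeff_add, coeff_add, hp, hq, add_mul]
  | monomial s a =>
    rw [pderiv_monomial, coeff_monomial, coeff_monomial]
    by_cases hsi : s i = 0
    · have h1 : s - Finsupp.single i 1 = s := by
        ext j
        rw [Finsupp.tsub_apply]
        by_cases hj : j = i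
        · subst hj; simp [hsi]
        · simp [Finsupp.single_apply, Ne.symm hj, hj]
      rw [h1, hsi]
      have h2 : s ≠ m + Finsupp.single i 1 := by
        intro h
        apply absurd hsi
        rw [h]
        simp [Finsupp.add_apply, Finsupp.single_apply]
      rw [if_neg h2]
      split_ifs <;> simp
    · have hiff : s - Finsupp.single i 1 = m ↔ s = m + Finsupp.single i 1 := by
        constructor
        · intro h
          ext j
          have := congrArg (fun f => f j) h
          simp only [Finsupp.tsub_apply] at this
          rw [Finsupp.add_apply]
          by_cases hj : j = i
          · subst hj; simp only [Finsupp.single_eq_same] at this ⊢; omega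
          · simp only [Finsupp.single_apply, if_neg (Ne.symm hj)] at this ⊢; omega
        · intro h
          subst h
          ext j
          rw [Finsupp.tsub_apply, Finsupp.add_apply]
          by_cases hj : j = i
          · subst hj; simp
          · simp [Finsupp.single_apply, Ne.symm hj]
      by_cases h : s - Finsupp.single i 1 = m
      · rw [if_pos h, if_pos (hiff.mp h)]
        have : s i = m i + 1 := by
          rw [hiff.mp h]
          simp [Finsupp.add_apply, Finsupp.single_apply]
        rw [this]
        push_cast
        ring
      · rw [if_neg h, if_neg (fun hc => h (hiff.mpr hc))]
        simp

lemma pderiv_LP (M : ℕ) (i : Fin 2) (p : P) :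
    pderiv i (LP M p) = (∑ k ∈ Finset.range M, (-p)^k) * pderiv i p := by
  rw [LP, map_sum, Finset.sum_mul]
  apply Finset.sum_congr rfl
  intro k _
  rw [pderiv_C_mul, pderiv_pow]
  simp only [Nat.add_sub_cancel]
  have h1 : (((k+1 : ℕ) : P)) = C ((k+1 : ℕ) : ℚ) := by
    rw [MvPolynomial.C_eq_coe_nat]
  have h2 : C ((-1)^k / (k+1) : ℚ) * (((k+1:ℕ) : P) * p ^ k * pderiv i p)
      = (C ((-1)^k / (k+1) : ℚ) * C ((k+1 : ℕ) : ℚ)) * (p ^ k * pderiv i p) := by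
    rw [h1]; ring
  push_cast at h2 ⊢
  rw [h2, ← C_mul]
  have h3 : ((-1)^k / (k+1) * (k+1) : ℚ) = (-1)^k := by
    field_simp
  rw [h3]
  have h4 : (C ((-1)^k : ℚ) : P) = (-1 : P)^k := by
    rw [map_pow, map_neg, map_one]
  rw [h4, neg_pow]
  ring

lemma geom_mul (p : P) (M : ℕ) :
    (1 + p) * ∑ k ∈ Finset.range M, (-p)^k = 1 - (-p)^M := by
  have h := geom_sum_mul (-p) M
  linear_combination -h

lemma one_add_X_ne_zero (i : Fin 2) : (1 + X i : P) ≠ 0 := by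
  intro h
  have := congrArg constantCoeff h
  simp at this

lemma ZZ_eq : ZZ = XX + YY + XX * YY := rfl

lemma pd0_XX : pderiv (0 : Fin 2) XX = 1 := pderiv_X_self 0
lemma pd0_YY : pderiv (0 : Fin 2) YY = 0 := pderiv_X_of_ne (by decide)
lemma pd1_XX : pderiv (1 : Fin 2) XX = 0 := pderiv_X_of_ne (by decide)
lemma pd1_YY : pderiv (1 : Fin 2) YY = 1 := pderiv_X_self 1

lemma pd0_ZZ : pderiv (0 : Fin 2) ZZ = 1 + YY := by
  rw [ZZ_eq, map_add, map_add, pderiv_mul, pd0_XX, pd0_YY]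
  ring

lemma pd1_ZZ : pderiv (1 : Fin 2) ZZ = 1 + XX := by
  rw [ZZ_eq, map_add, map_add, pderiv_mul, pd1_XX, pd1_YY]
  ring

lemma pd0_HH (M : ℕ) :
    (1 + XX) * pderiv 0 (HH M) = (-ZZ)^M - (-XX)^M := by
  have g1 := geom_mul XX M
  have g2 := geom_mul ZZ M
  have hfact : (1 + XX) * (1 + YY) = 1 + ZZ := by rw [ZZ_eq]; ring
  rw [HH, map_sub, map_add, pderiv_LP, pderiv_LP, pderiv_LP, pd0_XX, pd0_YY, pd0_ZZ]
  linear_combination g1 - g2 - (∑ k ∈ Finset.range M, (-ZZ)^k) * hfact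

lemma pd1_HH (M : ℕ) :
    (1 + YY) * pderiv 1 (HH M) = (-ZZ)^M - (-YY)^M := by
  have g1 := geom_mul YY M
  have g2 := geom_mul ZZ M
  have hfact : (1 + XX) * (1 + YY) = 1 + ZZ := by rw [ZZ_eq]; ring
  rw [HH, map_sub, map_add, pderiv_LP, pderiv_LP, pderiv_LP, pd1_XX, pd1_YY, pd1_ZZ]
  linear_combination g1 - g2 - (∑ k ∈ Finset.range M, (-ZZ)^k) * hfact

lemma pd0_HH' (M : ℕ) :
    pderiv 0 (HH M) = (∑ k ∈ Finset.range M, (-ZZ)^k * (-XX)^(M-1-k)) * (-YY) := by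
  have h2 := geom_sum₂_mul (-ZZ) (-XX) M
  have h3 : (-ZZ) - (-XX) = (-YY) * (1 + XX) := by rw [ZZ_eq]; ring
  apply mul_left_cancel₀ (one_add_X_ne_zero 0)
  rw [show (X (0:Fin 2) : P) = XX from rfl, pd0_HH M]
  linear_combination -h2 + (∑ k ∈ Finset.range M, (-ZZ)^k * (-XX)^(M-1-k)) * h3

lemma pd1_HH' (M : ℕ) :
    pderiv 1 (HH M) = (∑ k ∈ Finset.range M, (-ZZ)^k * (-YY)^(M-1-k)) * (-XX) := by
  have h2 := geom_sum₂_mul (-ZZ) (-YY) M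
  have h3 : (-ZZ) - (-YY) = (-XX) * (1 + YY) := by rw [ZZ_eq]; ring
  apply mul_left_cancel₀ (one_add_X_ne_zero 1)
  rw [show (X (1:Fin 2) : P) = YY from rfl, pd1_HH M]
  linear_combination -h2 + (∑ k ∈ Finset.range M, (-ZZ)^k * (-YY)^(M-1-k)) * h3

lemma Low_pd0 (M : ℕ) : Low M (pderiv 0 (HH M)) := by
  rw [pd0_HH' M]
  have hsum : Low (M-1) (∑ k ∈ Finset.range M, (-ZZ)^k * (-XX)^(M-1-k)) := by
    apply Low.sum
    intro k hk
    rw [Finset.mem_range] at hk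
    have h1 : Low (k * 1) ((-ZZ)^k) := Low_ZZ.neg.pow k
    have h2 : Low ((M-1-k) * 1) ((-XX)^(M-1-k)) := Low_XX.neg.pow _
    have := h1.mul h2
    exact this.mono (by omega)
  exact (hsum.mul Low_YY.neg).mono (by omega)

lemma Low_pd1 (M : ℕ) : Low M (pderiv 1 (HH M)) := by
  rw [pd1_HH' M]
  have hsum : Low (M-1) (∑ k ∈ Finset.range M, (-ZZ)^k * (-YY)^(M-1-k)) := by
    apply Low.sum
    intro k hk
    rw [Finset.mem_range] at hk
    have h1 : Low (k * 1) ((-ZZ)^k) := Low_ZZ.neg.pow k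
    have h2 : Low ((M-1-k) * 1) ((-YY)^(M-1-k)) := Low_YY.neg.pow _
    exact (h1.mul h2).mono (by omega)
  exact (hsum.mul Low_XX.neg).mono (by omega)

lemma constantCoeff_HH (M : ℕ) : constantCoeff (HH M) = 0 := by
  have h : ∀ p : P, constantCoeff p = 0 → constantCoeff (LP M p) = 0 := by
    intro p hp
    rw [LP, map_sum]
    apply Finset.sum_eq_zero
    intro k _
    rw [map_mul, map_pow, hp, zero_pow (Nat.succ_ne_zero k), mul_zero]
  have hX : constantCoeff XX = 0 := constantCoeff_X (R := ℚ) (0 : Fin 2)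
  have hY : constantCoeff YY = 0 := constantCoeff_X (R := ℚ) (1 : Fin 2)
  have hZ : constantCoeff ZZ = 0 := by
    rw [ZZ_eq, map_add, map_add, map_mul, hX, hY]; ring
  rw [HH, map_sub, map_add, h XX hX, h YY hY, h ZZ hZ]; ring

lemma HH_coeff_zero (M : ℕ) (m : Fin 2 →₀ ℕ) (hm : deg m ≤ M) : coeff m (HH M) = 0 := by
  by_cases h0 : m 0 ≠ 0
  · set m' := m - Finsupp.single 0 1 with hm'
    have hadd : m' + Finsupp.single 0 1 = m := by
      ext j
      rw [Finsupp.add_apply, hm', Finsupp.tsub_apply]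
      by_cases hj : j = 0
      · subst hj; simp only [Finsupp.single_eq_same]; omega
      · simp only [Finsupp.single_apply, if_neg (Ne.symm hj)]; omega
    have hdeg : deg m' < M := by
      have h1 : m' 0 = m 0 - 1 := by
        rw [hm', Finsupp.tsub_apply, Finsupp.single_eq_same]
      have h2 : m' 1 = m 1 := by
        rw [hm', Finsupp.tsub_apply]
        simp [Finsupp.single_apply]
      simp only [deg] at hm ⊢
      omega
    have := coeff_pderiv 0 (HH M) m'
    rw [Low_pd0 M m' hdeg, hadd] at this
    have hne : ((m' 0 : ℚ) + 1) ≠ 0 := by positivity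
    exact (mul_eq_zero.mp this.symm).resolve_right hne
  · by_cases h1 : m 1 ≠ 0
    · set m' := m - Finsupp.single 1 1 with hm'
      have hadd : m' + Finsupp.single 1 1 = m := by
        ext j
        rw [Finsupp.add_apply, hm', Finsupp.tsub_apply]
        by_cases hj : j = 1
        · subst hj; simp only [Finsupp.single_eq_same]; omega
        · simp only [Finsupp.single_apply, if_neg (Ne.symm hj)]; omega
      have hdeg : deg m' < M := by
        have ha : m' 1 = m 1 - 1 := by
          rw [hm', Finsupp.tsub_apply, Finsupp.single_eq_same]
        have hb : m' 0 = m 0 := by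
          rw [hm', Finsupp.tsub_apply]
          simp [Finsupp.single_apply]
        simp only [deg] at hm ⊢
        omega
      have := coeff_pderiv 1 (HH M) m'
      rw [Low_pd1 M m' hdeg, hadd] at this
      have hne : ((m' 1 : ℚ) + 1) ≠ 0 := by positivity
      exact (mul_eq_zero.mp this.symm).resolve_right hne
    · push_neg at h0 h1
      have hm0 : m = 0 := by
        ext j
        fin_cases j
        · exact h0
        · exact h1
      rw [hm0]
      have := constantCoeff_HH M
      rwa [constantCoeff_eq] at this


lemma K_norm_sum_le {ι : Type*} (s : Finset ι) (f : ι → K) (C : ℝ) (hC : 0 ≤ C)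
    (h : ∀ i ∈ s, ‖f i‖ ≤ C) : ‖∑ i ∈ s, f i‖ ≤ C := by
  classical
  induction s using Finset.induction_on with
  | empty => simpa using hC
  | insert a s hne ih =>
    rw [Finset.sum_insert hne]
    refine (Padic.nonarchimedean _ _).trans
      (max_le (h a (Finset.mem_insert_self a s)) ?_)
    exact ih fun i hi => h i (Finset.mem_insert_of_mem hi)

/-- integral model of `X^(k+1) + Y^(k+1) - Z^(k+1)` -/
def W (k : ℕ) : MvPolynomial (Fin 2) ℤ :=
  (X 0)^(k+1) + (X 1)^(k+1) - (X 0 + X 1 + X 0 * X 1)^(k+1)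

lemma HH_eq_sum (M : ℕ) :
    HH M = ∑ k ∈ Finset.range M,
      C ((-1)^k / (k+1) : ℚ) * (MvPolynomial.map (Int.castRingHom ℚ) (W k)) := by
  have hmap : ∀ k, MvPolynomial.map (Int.castRingHom ℚ) (W k)
      = XX^(k+1) + YY^(k+1) - ZZ^(k+1) := by
    intro k
    rw [W, map_sub, map_add, map_pow, map_pow, map_pow, map_add, map_add, map_mul,
      MvPolynomial.map_X, MvPolynomial.map_X, ZZ_eq, XX, YY]
  rw [HH, LP, LP, LP, ← Finset.sum_add_distrib, ← Finset.sum_sub_distrib]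
  apply Finset.sum_congr rfl
  intro k _
  rw [hmap k]
  ring

lemma coeff_norm_le (M : ℕ) (hM : 1 ≤ M) (m : Fin 2 →₀ ℕ) :
    ‖((coeff m (HH M) : ℚ) : K)‖ ≤ (M : ℝ) := by
  rw [HH_eq_sum M]
  rw [coeff_sum]
  push_cast
  apply K_norm_sum_le _ _ _ (by positivity)
  intro k hk
  rw [Finset.mem_range] at hk
  rw [coeff_C_mul, coeff_map]
  push_cast
  rw [norm_mul, norm_div, norm_pow, norm_neg, norm_one, one_pow, one_div]
  have hint : ‖((coeff m (W k) : ℤ) : K)‖ ≤ 1 := Padic.norm_int_le_one _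
  have hinv : ‖((k:K) + 1)‖⁻¹ ≤ ((k:ℝ) + 1) := by
    have h1 := L.norm_natCast_ge (k+1) (Nat.succ_pos k)
    push_cast at h1
    have h2 : (0:ℝ) < ‖((k:K) + 1)‖ := by
      rw [norm_pos_iff]
      intro hc
      rw [show ((k:K) + 1) = ((k+1 : ℕ) : K) by push_cast; ring] at hc
      exact Nat.cast_ne_zero.mpr (Nat.succ_ne_zero k) hc
    rw [inv_le_iff_one_le_mul₀ h2]
    linarith
  calc ‖((k:K)+1)‖⁻¹ * ‖((coeff m (W k) : ℤ) : K)‖ ≤ ((k:ℝ)+1) * 1 := by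
        apply mul_le_mul hinv hint (norm_nonneg _) (by positivity)
    _ ≤ (M:ℝ) := by
        rw [mul_one]
        exact_mod_cast Nat.succ_le_of_lt hk

open L in
/-- truncated log series in `L` -/
def LL (M : ℕ) (t : L) : L :=
  ∑ k ∈ Finset.range M, CL (((-1)^k : K) / (k+1)) * t^(k+1)

open L in
lemma aeval_LP (M : ℕ) (v : Fin 2 → L) (p : P) :
    MvPolynomial.aeval v (LP M p) = LL M (MvPolynomial.aeval v p) := by
  rw [LP, map_sum, LL]
  apply Finset.sum_congr rfl
  intro k _
  rw [map_mul, map_pow, MvPolynomial.aeval_C, L.algebraMap_eq]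
  congr 2
  push_cast
  ring

open L in
lemma aeval_HH (M : ℕ) (v : Fin 2 → L) :
    MvPolynomial.aeval v (HH M)
      = LL M (v 0) + LL M (v 1) - LL M (v 0 + v 1 + v 0 * v 1) := by
  rw [HH, map_sub, map_add, aeval_LP, aeval_LP, aeval_LP]
  have h0 : MvPolynomial.aeval v XX = v 0 := MvPolynomial.aeval_X (f := v) 0
  have h1 : MvPolynomial.aeval v YY = v 1 := MvPolynomial.aeval_X (f := v) 1
  have hz : MvPolynomial.aeval v ZZ = v 0 + v 1 + v 0 * v 1 := by
    rw [ZZ_eq, map_add, map_add, map_mul, h0, h1]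
  rw [h0, h1, hz]

open L in
lemma nn_aeval_HH_le (M : ℕ) (hM : 1 ≤ M) (v : Fin 2 → L)
    (h0 : nn (v 0) ≤ 1/3) (h1 : nn (v 1) ≤ 1/3) :
    nn (MvPolynomial.aeval v (HH M)) ≤ (M:ℝ)^2 * (1/3)^(M+1) := by
  conv_lhs => rw [(HH M).as_sum]
  rw [map_sum]
  apply nn_sum_le _ _ _ (by positivity)
  intro m hm
  have hdeg : M + 1 ≤ deg m := by
    by_contra hc
    exact MvPolynomial.mem_support_iff.mp hm (HH_coeff_zero M m (by omega))
  rw [MvPolynomial.aeval_monomial, L.algebraMap_eq]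
  have hprod : (m.prod fun i k => v i ^ k) = v 0 ^ m 0 * v 1 ^ m 1 := by
    rw [Finsupp.prod_fintype _ _ (fun i => pow_zero (v i))]
    exact Fin.prod_univ_two _
  rw [hprod, nn_C_mul]
  have hn0 : nn (v 0 ^ m 0 * v 1 ^ m 1) ≤ (1/3 : ℝ)^(deg m) := by
    refine (nn_mul_le _ _).trans ?_
    calc nn (v 0 ^ m 0) * nn (v 1 ^ m 1) ≤ nn (v 0) ^ m 0 * nn (v 1) ^ m 1 :=
          mul_le_mul (nn_pow_le _ _) (nn_pow_le _ _) (nn_nonneg _)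
            (pow_nonneg (nn_nonneg _) _)
      _ ≤ (1/3 : ℝ)^(m 0) * (1/3 : ℝ)^(m 1) :=
          mul_le_mul (pow_le_pow_left₀ (nn_nonneg _) h0 _)
            (pow_le_pow_left₀ (nn_nonneg _) h1 _)
            (pow_nonneg (nn_nonneg _) _) (by positivity)
      _ = (1/3 : ℝ)^(deg m) := by rw [← pow_add]; rfl
  have hc : ‖((coeff m (HH M) : ℚ) : K)‖^2 ≤ (M:ℝ)^2 :=
    pow_le_pow_left₀ (norm_nonneg _) (coeff_norm_le M hM m) 2
  calc ‖((coeff m (HH M) : ℚ) : K)‖^2 * nn (v 0 ^ m 0 * v 1 ^ m 1)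
      ≤ (M:ℝ)^2 * (1/3 : ℝ)^(deg m) :=
        mul_le_mul hc hn0 (nn_nonneg _) (by positivity)
    _ ≤ (M:ℝ)^2 * (1/3 : ℝ)^(M+1) := by
        apply mul_le_mul_of_nonneg_left _ (by positivity)
        exact pow_le_pow_of_le_one (by norm_num) (by norm_num) hdeg

namespace L

def piL : L := ⟨0, 1⟩
def uL : L := ⟨-(3/2), 1/2⟩
def wL : L := ⟨-(3/2), -(1/2)⟩

lemma id1 : uL + (-piL) + uL * (-piL) = piL := by
  ext <;> simp [piL, uL] <;> ring

lemma id2 : uL + uL + uL * uL = wL := by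
  ext <;> simp [uL, wL] <;> ring

lemma id3 : wL + uL + wL * uL = 0 := by
  ext <;> simp [uL, wL] <;> ring

lemma pi_sq : piL * piL = CL (-3) := by
  ext <;> simp [piL]

lemma norm_one_K : ‖(1 : K)‖ = 1 := norm_one

lemma norm_half : ‖(2 : K)⁻¹‖ = 1 := by rw [norm_inv, norm_two]; norm_num

lemma norm_3half : ‖(3/2 : K)‖ = 1/3 := by
  rw [norm_div, norm_three, norm_two]; norm_num

lemma nn_piL : nn piL = 1/3 := by
  simp [nn, piL]

lemma nn_neg_piL : nn (-piL) ≤ 1/3 := by rw [nn_neg, nn_piL]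

lemma nn_uL : nn uL ≤ 1/3 := by
  have h1 : ‖(-(3/2) : K)‖ = 1/3 := by rw [norm_neg, norm_3half]
  have h2 : ‖((1:K)/2)‖ = 1 := by rw [norm_div, norm_one, norm_two]; norm_num
  simp only [nn, uL]
  apply max_le
  · rw [h1]; norm_num
  · rw [h2]; norm_num

lemma nn_wL : nn wL ≤ 1/3 := by
  have h1 : ‖(-(3/2) : K)‖ = 1/3 := by rw [norm_neg, norm_3half]
  have h2 : ‖(-(1/2) : K)‖ = 1 := by
    rw [norm_neg, norm_div, norm_one, norm_two]; norm_num
  simp only [nn, wL]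
  apply max_le
  · rw [h1]; norm_num
  · rw [h2]; norm_num

end L

open L

lemma LL_zero (M : ℕ) : LL M (0 : L) = 0 := by
  simp [LL, zero_pow (Nat.succ_ne_zero _)]

lemma hCL3 : (CL (3:K)) = (3:L) := map_ofNat CL 3

lemma keyA (M : ℕ) (hM : 1 ≤ M) :
    nn (LL M piL - LL M (-piL)) ≤ 9 * ((M:ℝ)^2 * (1/3)^(M+1)) := by
  set B := (M:ℝ)^2 * (1/3)^(M+1) with hBdef
  have hB : 0 ≤ B := by positivity
  have hv1 : (![uL, -piL] : Fin 2 → L) 0 = uL := rfl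
  have hv2 : (![uL, -piL] : Fin 2 → L) 1 = -piL := rfl
  have e1 := aeval_HH M ![uL, -piL]
  rw [show (![uL, -piL] : Fin 2 → L) 0 = uL from rfl,
    show (![uL, -piL] : Fin 2 → L) 1 = -piL from rfl, id1] at e1
  have e2 := aeval_HH M ![uL, uL]
  rw [show (![uL, uL] : Fin 2 → L) 0 = uL from rfl,
    show (![uL, uL] : Fin 2 → L) 1 = uL from rfl, id2] at e2
  have e3 := aeval_HH M ![wL, uL]
  rw [show (![wL, uL] : Fin 2 → L) 0 = wL from rfl,
    show (![wL, uL] : Fin 2 → L) 1 = uL from rfl, id3, LL_zero] at e3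
  have b1 : nn (MvPolynomial.aeval ![uL, -piL] (HH M)) ≤ B :=
    nn_aeval_HH_le M hM _ (by rw [hv1]; exact nn_uL) (by rw [hv2]; exact nn_neg_piL)
  have b2 : nn (MvPolynomial.aeval ![uL, uL] (HH M)) ≤ B :=
    nn_aeval_HH_le M hM _ (nn_uL) (nn_uL)
  have b3 : nn (MvPolynomial.aeval ![wL, uL] (HH M)) ≤ B :=
    nn_aeval_HH_le M hM _ (nn_wL) (nn_uL)
  set EH1 := MvPolynomial.aeval ![uL, -piL] (HH M)
  set EH2 := MvPolynomial.aeval ![uL, uL] (HH M)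
  set EH3 := MvPolynomial.aeval ![wL, uL] (HH M)
  have h3A : CL 3 * (LL M piL - LL M (-piL)) = EH2 + EH3 - CL 3 * EH1 := by
    rw [hCL3]
    linear_combination 3 * e1 - e2 - e3
  have hnnL : nn (CL 3 * (LL M piL - LL M (-piL)))
      = (1/9) * nn (LL M piL - LL M (-piL)) := by
    rw [nn_C_mul, norm_three]; norm_num
  have hnnR : nn (EH2 + EH3 - CL 3 * EH1) ≤ B := by
    rw [sub_eq_add_neg]
    refine (nn_add_le _ _).trans (max_le ((nn_add_le _ _).trans (max_le b2 b3)) ?_)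
    rw [nn_neg, nn_C_mul, norm_three]
    calc (1/3:ℝ)^2 * nn EH1 ≤ 1 * nn EH1 := by
          apply mul_le_mul_of_nonneg_right (by norm_num) (nn_nonneg _)
      _ ≤ B := by rw [one_mul]; exact b1
  have hfin : (1/9) * nn (LL M piL - LL M (-piL)) ≤ B := by
    rw [← hnnL, h3A]; exact hnnR
  linarith

def SS (N : ℕ) : K := ∑ k ∈ Finset.range N, ((-3 : K)^k / ((2*k+1 : ℕ) : K))

lemma pi_pow (n : ℕ) : piL^(2*n+1) = CL ((-3 : K)^n) * piL := by
  induction n with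
  | zero => simp
  | succ n ih =>
    have h : 2*(n+1)+1 = (2*n+1) + 2 := by ring
    calc piL^(2*(n+1)+1) = piL^(2*n+1) * (piL * piL) := by rw [h, pow_add, pow_two]
      _ = CL ((-3:K)^n) * piL * CL (-3) := by rw [ih, pi_sq]
      _ = CL ((-3:K)^(n+1)) * piL := by
          rw [pow_succ, map_mul]; ring

lemma Aeq (N : ℕ) :
    LL (2*N) piL - LL (2*N) (-piL) = CL (2 * SS N) * piL := by
  induction N with
  | zero => simp [LL, SS]
  | succ N ih =>
    have hstep : ∀ t : L, LL (2*(N+1)) t = LL (2*N) t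
        + CL (((-1:K)^(2*N))/((2*N:K)+1)) * t^(2*N+1)
        + CL (((-1:K)^(2*N+1))/((2*N:K)+1+1)) * t^(2*N+1+1) := by
      intro t
      rw [show 2*(N+1) = (2*N)+1+1 by ring, LL, Finset.sum_range_succ,
        Finset.sum_range_succ, ← LL]
      push_cast
      ring_nf
    have hSS : SS (N+1) = SS N + (-3:K)^N / ((2*N+1 : ℕ) : K) :=
      Finset.sum_range_succ _ _
    have hq : CL (2 * (SS N + (-3:K)^N / ((2*N+1 : ℕ) : K))) * piL
        = CL (2*SS N) * piL + CL (2 * ((-3:K)^N / ((2*N+1 : ℕ) : K))) * piL := by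
      rw [mul_add, map_add, add_mul]
    have hodd : (-piL)^(2*N+1) = -(piL^(2*N+1)) := by
      rw [neg_pow]
      have h1 : (-1 : L)^(2*N+1) = -1 := by
        rw [pow_succ, pow_mul]; norm_num
      rw [h1]; ring
    have heven : (-piL)^(2*N+1+1) = piL^(2*N+1+1) := by
      rw [neg_pow]
      have h1 : (-1 : L)^(2*N+1+1) = 1 := by
        rw [show 2*N+1+1 = 2*(N+1) by ring, pow_mul]; norm_num
      rw [h1]; ring
    have hc : CL (((-1:K)^(2*N))/((2*N:K)+1)) * (2:L) * CL ((-3:K)^N)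
        = CL (2 * ((-3:K)^N / ((2*N+1:ℕ):K))) := by
      rw [show (2:L) = CL (2:K) from (map_ofNat CL 2).symm, ← map_mul, ← map_mul]
      congr 1
      push_cast
      rw [pow_mul]
      norm_num
      ring
    have hfin : CL (((-1:K)^(2*N))/((2*N:K)+1)) * piL^(2*N+1)
          - CL (((-1:K)^(2*N))/((2*N:K)+1)) * (-(piL^(2*N+1)))
        = CL (2 * ((-3:K)^N / ((2*N+1 : ℕ) : K))) * piL := by
      rw [pi_pow N]
      linear_combination piL * hc
    rw [hstep piL, hstep (-piL), hSS, hq, ← ih, hodd, heven]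
    linear_combination hfin

lemma SS_norm_le (N : ℕ) : ‖SS N‖ ≤ 6 * N * (1/3 : ℝ)^N := by
  rcases Nat.eq_zero_or_pos N with h0 | hN
  · subst h0
    simp [SS]
  · have hM : 1 ≤ 2*N := by omega
    have hkey := keyA (2*N) hM
    rw [Aeq N] at hkey
    have hnnA : nn (CL (2 * SS N) * piL) = ‖SS N‖^2 * (1/3) := by
      rw [nn_C_mul, nn_piL, norm_mul, norm_two, one_mul]
    rw [hnnA] at hkey
    have hsq : ‖SS N‖^2 ≤ (6 * N * (1/3:ℝ)^N)^2 := by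
      have hexp : ((2*N : ℕ) : ℝ) = 2*(N:ℝ) := by push_cast; ring
      rw [hexp] at hkey
      have h1 : (1/3:ℝ)^(2*N+1) = (1/3:ℝ)^(2*N) * (1/3) := pow_succ _ _
      have h2 : (1/3:ℝ)^(2*N) = ((1/3:ℝ)^N)^2 := by rw [← pow_mul, Nat.mul_comm]
      nlinarith [pow_nonneg (by norm_num : (0:ℝ) ≤ 1/3) N, sq_nonneg ((1/3:ℝ)^N)]
    have h6 : (0:ℝ) ≤ 6 * N * (1/3:ℝ)^N := by positivity
    nlinarith [norm_nonneg (SS N)]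

end P3A

/-- The series `∑_{k=0}^∞ (−3)^k/(2k+1)` converges to `0` in `ℚ₃`. -/
theorem stmt_17 :
    Filter.Tendsto
      (fun N : ℕ => ∑ k ∈ Finset.range N, ((-3 : ℚ_[3]) ^ k / ((2 * k + 1 : ℕ) : ℚ_[3])))
      Filter.atTop (nhds 0) := by
  have heq : (fun N : ℕ => ∑ k ∈ Finset.range N, ((-3 : ℚ_[3]) ^ k / ((2 * k + 1 : ℕ) : ℚ_[3])))
      = P3A.SS := rfl
  rw [heq, tendsto_zero_iff_norm_tendsto_zero]
  have hb : Filter.Tendsto (fun N : ℕ => 6 * (N:ℝ) * (1/3 : ℝ)^N) Filter.atTop (nhds 0) := by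
    have hsum : Summable (fun N : ℕ => (N:ℝ)^1 * (1/3:ℝ)^N) :=
      summable_pow_mul_geometric_of_norm_lt_one 1 (by rw [Real.norm_eq_abs]; rw [abs_of_pos (by norm_num : (0:ℝ) < 1/3)]; norm_num)
    have h0 := hsum.tendsto_atTop_zero
    have h6 := h0.const_mul (6:ℝ)
    simp only [mul_zero] at h6
    convert h6 using 2 with N
    ring
  apply squeeze_zero (fun N => norm_nonneg _) (fun N => P3A.SS_norm_le N) hb
end
end

section
/- For every integer a ≥ 1: ∑_{k=0}^{3^a − 1} C(2(3^a) − 3, k) ≡ 1 (mod 3), where the sum is the partial sum of the binomial coefficients of 2·3^a − 3. (One has ∑_{k=0}^{3^a−1} C(2·3^a−3,k) = 2^{2·3^a−4} + (1/2)·C(2·3^a−3, 3^a−2) + C(2·3^a−3, 3^a−1).) -/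
theorem stmt_18 (a : ℕ) (ha : 1 ≤ a) :
    (∑ k ∈ Finset.range (3 ^ a), Nat.choose (2 * 3 ^ a - 3) k) ≡ 1 [MOD 3] := by
  have hN : 3 ≤ 3 ^ a := by
    calc 3 = 3 ^ 1 := by norm_num
    _ ≤ 3 ^ a := Nat.pow_le_pow_right (by norm_num) ha
  obtain ⟨b, hb⟩ : ∃ b, 3 ^ a = b + 3 := ⟨3 ^ a - 3, by omega⟩
  have hb3 : (3 : ℕ) ∣ b + 3 := hb ▸ dvd_pow_self 3 (by omega)
  set m := 2 * b + 3 with hm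
  have hm' : 2 * 3 ^ a - 3 = m := by omega
  rw [hm', hb]
  set S := ∑ k ∈ Finset.range (b + 3), Nat.choose m k with hS
  -- reflection: S equals the sum of choose m (b+1+j) for j < b+3
  have hrefl : S = ∑ j ∈ Finset.range (b + 3), Nat.choose m (b + 1 + j) := by
    rw [hS, ← Finset.sum_range_reflect (fun j => Nat.choose m (b + 1 + j)) (b + 3)]
    apply Finset.sum_congr rfl
    intro k hk
    rw [Finset.mem_range] at hk
    have h1 : b + 1 + (b + 3 - 1 - k) = m - k := by omega
    rw [h1, Nat.choose_symm (by omega)]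
  -- split the reflected sum
  have hsplit : ∑ j ∈ Finset.range (b + 3), Nat.choose m (b + 1 + j) =
      Nat.choose m (b + 1) + Nat.choose m (b + 2) +
        ∑ j ∈ Finset.range (b + 1), Nat.choose m (b + 3 + j) := by
    have h23 : (b + 3) = 2 + (b + 1) := by omega
    rw [h23, Finset.sum_range_add, Finset.sum_range_succ, Finset.sum_range_one]
    simp only [show ∀ j, b + 1 + (2 + j) = b + 3 + j from fun j => by omega,
      show ∀ j : ℕ, 2 + (b + 1) + j = b + 3 + j from fun j => by omega]
  -- S plus the tail is the full sum 2^m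
  have hfull : S + ∑ j ∈ Finset.range (b + 1), Nat.choose m (b + 3 + j) = 2 ^ m := by
    rw [hS, ← Finset.sum_range_add]
    have : b + 3 + (b + 1) = m + 1 := by omega
    rw [this, Nat.sum_range_choose]
  have key : 2 * S = 2 ^ m + Nat.choose (m + 1) (b + 2) := by
    have hcs : Nat.choose (m + 1) (b + 2) = Nat.choose m (b + 1) + Nat.choose m (b + 2) := by
      exact Nat.choose_succ_succ m (b + 1)
    calc 2 * S = S + S := by ring
    _ = S + (Nat.choose m (b + 1) + Nat.choose m (b + 2) +
        ∑ j ∈ Finset.range (b + 1), Nat.choose m (b + 3 + j)) := by rw [← hsplit, ← hrefl]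
    _ = (S + ∑ j ∈ Finset.range (b + 1), Nat.choose m (b + 3 + j)) +
        (Nat.choose m (b + 1) + Nat.choose m (b + 2)) := by ring
    _ = 2 ^ m + Nat.choose (m + 1) (b + 2) := by rw [hfull, hcs]
  -- 3 divides choose (m+1) (b+2) by Lucas
  have hdvd : 3 ∣ Nat.choose (m + 1) (b + 2) := by
    haveI : Fact (Nat.Prime 3) := ⟨by norm_num⟩
    have hlucas := @Choose.choose_modEq_choose_mod_mul_choose_div_nat (m + 1) (b + 2) 3 _
    have h1 : (m + 1) % 3 = 1 := by omega
    have h2 : (b + 2) % 3 = 2 := by omega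
    rw [h1, h2, show Nat.choose 1 2 = 0 from rfl, zero_mul] at hlucas
    exact (Nat.modEq_zero_iff_dvd).mp hlucas
  -- 2^m ≡ 2 mod 3
  have hpow : 2 ^ m ≡ 2 [MOD 3] := by
    have he : (2 : ℕ) ^ m = 4 ^ b * 8 := by rw [hm, pow_add, pow_mul]; norm_num
    rw [he]
    calc (4 : ℕ) ^ b * 8 ≡ 1 ^ b * 8 [MOD 3] := Nat.ModEq.mul_right 8 (Nat.ModEq.pow b (by decide))
    _ = 8 := by rw [one_pow, one_mul]
    _ ≡ 2 [MOD 3] := by decide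
  -- conclude in ZMod 3
  have h2S : 2 * S ≡ 2 [MOD 3] := by
    calc 2 * S = 2 ^ m + Nat.choose (m + 1) (b + 2) := key
    _ ≡ 2 + 0 [MOD 3] := Nat.ModEq.add hpow ((Nat.modEq_zero_iff_dvd).mpr hdvd)
    _ = 2 := by ring
  have hz : ((2 * S : ℕ) : ZMod 3) = ((2 : ℕ) : ZMod 3) :=
    (ZMod.natCast_eq_natCast_iff _ _ _).mpr h2S
  rw [← ZMod.natCast_eq_natCast_iff]
  push_cast at hz ⊢
  revert hz
  generalize ((S : ZMod 3)) = x
  revert x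
  decide
end
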